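/- arXiv:1207.1004 — 4 statements merged into one kernel-verified Lean document; each statement's English description precedes it below -/
import Mathlib

section
/- Let K be a compact subset of ℝ^d and let α > 0 be such that H^α(K ∩ V_a) = 0 for every a ∈ ℝ, where V_a = {x ∈ ℝ^d : x_1 = a}. Then for every compact set L ⊂ K and every integer k > 0, the map g : ℝ → ℝ defined by g(u) = M^α_{2^{-k}}(L ∩ {x ∈ ℝ^d : x_1 ≤ u}) is continuous. -/
open MeasureTheory Filter Metric Set Topology
open scoped ENNReal

/-- The half-open dyadic cube of generation `k` indexed by `m ∈ ℤ^d`: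
`∏ᵢ [mᵢ 2^{-k}, (mᵢ+1) 2^{-k})`. -/
def dyadicCube {d : ℕ} (k : ℕ) (m : Fin d → ℤ) : Set (EuclideanSpace ℝ (Fin d)) :=
  {x | ∀ i, (m i : ℝ) / 2 ^ k ≤ x i ∧ x i < ((m i : ℝ) + 1) / 2 ^ k}

/-- The `s`-dimensional net premeasure at scale `δ`: `inf ∑ |Bᵢ|^s` over countable covers
of `E` by dyadic cubes of diameter at most `δ`. -/
noncomputable def netPre {d : ℕ} (s δ : ℝ) (E : Set (EuclideanSpace ℝ (Fin d))) : ℝ≥0∞ :=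
  ⨅ (C : Set (ℕ × (Fin d → ℤ))) (_ : C.Countable)
    (_ : E ⊆ ⋃ p ∈ C, dyadicCube p.1 p.2)
    (_ : ∀ p ∈ C, Metric.diam (dyadicCube p.1 p.2) ≤ δ),
    ∑' p : C, ENNReal.ofReal (Metric.diam (dyadicCube (p : ℕ × (Fin d → ℤ)).1
      (p : ℕ × (Fin d → ℤ)).2) ^ s)

namespace NetAux


variable {d : ℕ}

noncomputable def tvec (d j : ℕ) (e : Fin d → ℤ) : EuclideanSpace ℝ (Fin d) := WithLp.toLp 2 (fun i => (e i : ℝ) / 2 ^ j)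

@[simp] theorem tvec_apply (j : ℕ) (e : Fin d → ℤ) (i : Fin d) :
    tvec d j e i = (e i : ℝ) / 2 ^ j := rfl

theorem mem_dyadicCube_floor (j : ℕ) (x : EuclideanSpace ℝ (Fin d)) :
    x ∈ dyadicCube j (fun i => ⌊x i * 2 ^ j⌋) := by
  intro i
  have h2 : (0:ℝ) < 2 ^ j := by positivity
  constructor
  · rw [div_le_iff₀ h2]
    exact Int.floor_le _
  · rw [lt_div_iff₀ h2]
    exact Int.lt_floor_add_one _

theorem dist_coord_le (x y : EuclideanSpace ℝ (Fin d)) (j : ℕ) (m : Fin d → ℤ)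
    (hx : x ∈ dyadicCube j m) (hy : y ∈ dyadicCube j m) (i : Fin d) :
    dist (x i) (y i) ≤ 1 / 2 ^ j := by
  have hxi := hx i; have hyi := hy i
  have hsplit : ((m i : ℝ) + 1) / 2 ^ j = (m i : ℝ) / 2 ^ j + 1 / 2 ^ j := by ring
  rw [Real.dist_eq, abs_sub_le_iff]
  constructor <;> linarith [hxi.1, hxi.2, hyi.1, hyi.2, hsplit]

theorem diam_dyadicCube_le (j : ℕ) (m : Fin d → ℤ) :
    Metric.diam (dyadicCube j m) ≤ Real.sqrt d / 2 ^ j := by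
  apply Metric.diam_le_of_forall_dist_le (by positivity)
  intro x hx y hy
  rw [EuclideanSpace.dist_eq]
  have key : ∑ i, dist (x i) (y i) ^ 2 ≤ (d : ℝ) * (1 / 2 ^ j) ^ 2 := by
    calc ∑ i, dist (x i) (y i) ^ 2 ≤ ∑ _i : Fin d, (1 / 2 ^ j : ℝ) ^ 2 :=
          Finset.sum_le_sum fun i _ =>
            pow_le_pow_left₀ dist_nonneg (dist_coord_le x y j m hx hy i) 2
      _ = (d : ℝ) * (1 / 2 ^ j) ^ 2 := by simp [Finset.sum_const]
  calc Real.sqrt (∑ i, dist (x i) (y i) ^ 2) ≤ Real.sqrt ((d : ℝ) * (1 / 2 ^ j) ^ 2) :=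
        Real.sqrt_le_sqrt key
    _ = Real.sqrt d / 2 ^ j := by
        rw [Real.sqrt_mul (by positivity), Real.sqrt_sq (by positivity)]
        ring

theorem dyadicCube_translate (j : ℕ) (m e : Fin d → ℤ) :
    dyadicCube j (fun i => m i + e i) = (fun x => x + tvec d j e) '' dyadicCube j m := by
  ext x
  simp only [Set.mem_image]
  constructor
  · intro hx
    refine ⟨x - tvec d j e, fun i => ?_, by abel⟩
    have h := hx i
    have hxi : (x - tvec d j e) i = x i - (e i : ℝ) / 2 ^ j := by simp
    rw [hxi]
    push_cast at h ⊢
    constructor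
    · have : ((m i : ℝ) + e i) / 2 ^ j = (m i : ℝ) / 2 ^ j + (e i : ℝ) / 2 ^ j := by ring
      linarith [h.1]
    · have : ((m i : ℝ) + e i + 1) / 2 ^ j = ((m i : ℝ) + 1) / 2 ^ j + (e i : ℝ) / 2 ^ j := by
        ring
      linarith [h.2]
  · rintro ⟨y, hy, rfl⟩
    intro i
    have h := hy i
    have hxi : (y + tvec d j e) i = y i + (e i : ℝ) / 2 ^ j := by simp
    rw [hxi]
    push_cast
    constructor
    · have : ((m i : ℝ) + e i) / 2 ^ j = (m i : ℝ) / 2 ^ j + (e i : ℝ) / 2 ^ j := by ring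
      linarith [h.1]
    · have : ((m i : ℝ) + e i + 1) / 2 ^ j = ((m i : ℝ) + 1) / 2 ^ j + (e i : ℝ) / 2 ^ j := by
        ring
      linarith [h.2]

theorem diam_dyadicCube_eq (j : ℕ) (m m' : Fin d → ℤ) :
    Metric.diam (dyadicCube j m) = Metric.diam (dyadicCube j m') := by
  have key : ∀ m m' : Fin d → ℤ, Metric.diam (dyadicCube j m') ≤ Metric.diam (dyadicCube j m) := by
    intro m m'
    have h : dyadicCube j m' = dyadicCube j (fun i => m i + (m' i - m i)) := by
      congr 1; funext i; ring
    rw [h, dyadicCube_translate]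
    have hiso : Isometry (fun x : EuclideanSpace ℝ (Fin d) => x + tvec d j (fun i => m' i - m i)) :=
      Isometry.of_dist_eq fun a b => dist_add_right a b _
    rw [hiso.diam_image]
  exact le_antisymm (key m' m) (key m m')



def IsNetCover (δ : ℝ) (E : Set (EuclideanSpace ℝ (Fin d))) (C : Set (ℕ × (Fin d → ℤ))) : Prop :=
  C.Countable ∧ (E ⊆ ⋃ p ∈ C, dyadicCube p.1 p.2) ∧
    ∀ p ∈ C, Metric.diam (dyadicCube p.1 p.2) ≤ δ

noncomputable def coverSum (d : ℕ) (s : ℝ) (C : Set (ℕ × (Fin d → ℤ))) : ℝ≥0∞ :=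
  ∑' p : C, ENNReal.ofReal (Metric.diam (dyadicCube (p : ℕ × (Fin d → ℤ)).1
      (p : ℕ × (Fin d → ℤ)).2) ^ s)

theorem netPre_le_coverSum {s δ : ℝ} {E : Set (EuclideanSpace ℝ (Fin d))}
    {C : Set (ℕ × (Fin d → ℤ))} (h : IsNetCover δ E C) : netPre s δ E ≤ coverSum d s C :=
  iInf_le_of_le C (iInf_le_of_le h.1 (iInf_le_of_le h.2.1 (iInf_le _ h.2.2)))

theorem exists_cover_of_lt {s δ : ℝ} {E : Set (EuclideanSpace ℝ (Fin d))} {t : ℝ≥0∞}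
    (h : netPre s δ E < t) : ∃ C, IsNetCover δ E C ∧ coverSum d s C < t := by
  simp only [netPre, iInf_lt_iff] at h
  obtain ⟨C, hc, hcov, hd, hsum⟩ := h
  exact ⟨C, ⟨hc, hcov, hd⟩, hsum⟩

theorem netPre_mono {s δ : ℝ} {E F : Set (EuclideanSpace ℝ (Fin d))} (h : E ⊆ F) :
    netPre s δ E ≤ netPre s δ F :=
  le_iInf fun C => le_iInf fun hc => le_iInf fun hcov => le_iInf fun hdiam =>
    netPre_le_coverSum ⟨hc, h.trans hcov, hdiam⟩

set_option maxHeartbeats 1000000 in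
theorem coverSum_union_le {s : ℝ} (C₁ C₂ : Set (ℕ × (Fin d → ℤ))) :
    coverSum d s (C₁ ∪ C₂) ≤ coverSum d s C₁ + coverSum d s C₂ := by
  simp only [coverSum]
  apply ENNReal.tsum_union_le (fun p => ENNReal.ofReal (Metric.diam (dyadicCube p.1 p.2) ^ s)) C₁ C₂

theorem netPre_union_le {s δ : ℝ} (E F : Set (EuclideanSpace ℝ (Fin d))) :
    netPre s δ (E ∪ F) ≤ netPre s δ E + netPre s δ F := by
  by_cases h1 : netPre s δ E = ∞
  · rw [h1]; simp [top_add]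
  by_cases h2 : netPre s δ F = ∞
  · rw [h2]; simp [add_top]
  refine ENNReal.le_of_forall_pos_le_add fun ε hε _ => ?_
  have hε2 : (0 : ℝ≥0∞) < ε / 2 := by
    simp [ENNReal.div_pos_iff, hε.ne']
  obtain ⟨C₁, hC₁, hs₁⟩ := exists_cover_of_lt (s := s) (δ := δ) (E := E)
    (ENNReal.lt_add_right h1 hε2.ne')
  obtain ⟨C₂, hC₂, hs₂⟩ := exists_cover_of_lt (s := s) (δ := δ) (E := F)
    (ENNReal.lt_add_right h2 hε2.ne')
  have hcover : IsNetCover δ (E ∪ F) (C₁ ∪ C₂) := by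
    refine ⟨hC₁.1.union hC₂.1, ?_, ?_⟩
    · refine Set.union_subset (hC₁.2.1.trans ?_) (hC₂.2.1.trans ?_) <;>
        exact Set.biUnion_subset_biUnion_left (by simp [Set.subset_union_left, Set.subset_union_right])
    · intro p hp
      rcases hp with hp | hp
      · exact hC₁.2.2 p hp
      · exact hC₂.2.2 p hp
  calc netPre s δ (E ∪ F) ≤ coverSum d s (C₁ ∪ C₂) := netPre_le_coverSum hcover
    _ ≤ coverSum d s C₁ + coverSum d s C₂ := coverSum_union_le C₁ C₂
    _ ≤ (netPre s δ E + ε / 2) + (netPre s δ F + ε / 2) := add_le_add hs₁.le hs₂.le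
    _ = netPre s δ E + netPre s δ F + ε := by
        rw [add_add_add_comm, ENNReal.add_halves]
  


theorem dist_coord_le_dist (x y : EuclideanSpace ℝ (Fin d)) (i : Fin d) :
    dist (x i) (y i) ≤ dist x y := by
  rw [EuclideanSpace.dist_eq]
  have h1 : dist (x i) (y i) ^ 2 ≤ ∑ i', dist (x i') (y i') ^ 2 :=
    Finset.single_le_sum (f := fun i' => dist (x i') (y i') ^ 2)
      (fun i' _ => sq_nonneg _) (Finset.mem_univ i)
  calc dist (x i) (y i) = Real.sqrt (dist (x i) (y i) ^ 2) :=
        (Real.sqrt_sq dist_nonneg).symm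
    _ ≤ _ := Real.sqrt_le_sqrt h1

theorem coverSum_finset (s : ℝ) (F : Finset (ℕ × (Fin d → ℤ))) :
    coverSum d s (F : Set (ℕ × (Fin d → ℤ)))
      = ∑ p ∈ F, ENNReal.ofReal (Metric.diam (dyadicCube p.1 p.2) ^ s) := by
  simp only [coverSum]
  exact Finset.tsum_subtype F fun p => ENNReal.ofReal (Metric.diam (dyadicCube p.1 p.2) ^ s)

theorem cover_one_set (hd : 0 < d) {α : ℝ} (hα : 0 < α) {T : Set (EuclideanSpace ℝ (Fin d))}
    (hne : T.Nonempty) (hb : Bornology.IsBounded T) {β : ℝ} (hβ0 : 0 < β) (hβ1 : β ≤ 1)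
    (hdiam : Metric.diam T ≤ β) :
    ∃ F : Finset (ℕ × (Fin d → ℤ)),
      (T ⊆ ⋃ p ∈ (F : Set (ℕ × (Fin d → ℤ))), dyadicCube p.1 p.2) ∧
      (∀ p ∈ F, Metric.diam (dyadicCube p.1 p.2) ≤ Real.sqrt d * β) ∧
      coverSum d α (F : Set (ℕ × (Fin d → ℤ)))
        ≤ (5 : ℝ≥0∞) ^ d * ENNReal.ofReal ((Real.sqrt d * β) ^ α) := by
  obtain ⟨x, hx⟩ := hne
  have hexists : ∃ j : ℕ, (1/2 : ℝ) ^ j ≤ β := by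
    obtain ⟨n, hn⟩ := exists_pow_lt_of_lt_one hβ0 (by norm_num : (1/2 : ℝ) < 1)
    exact ⟨n, hn.le⟩
  set j := Nat.find hexists with hjdef
  have hj : (1/2 : ℝ) ^ j ≤ β := Nat.find_spec hexists
  have hP : (0:ℝ) < 2 ^ j := by positivity
  have hj2 : β < 2 * (1/2 : ℝ) ^ j := by
    rcases Nat.eq_zero_or_pos j with h | h
    · rw [h]; simpa using lt_of_le_of_lt hβ1 (by norm_num : (1:ℝ) < 2)
    · have hmin := Nat.find_min hexists (m := j - 1) (by omega)
      push_neg at hmin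
      have hj1 : j = (j - 1) + 1 := by omega
      have heq : 2 * (1/2 : ℝ) ^ j = (1/2) ^ (j - 1) := by
        nth_rewrite 1 [hj1]
        rw [pow_succ]
        ring
      linarith [hmin]
  have hβP : β * 2 ^ j < 2 := by
    have : (1/2 : ℝ) ^ j = 1 / 2 ^ j := by
      rw [div_pow, one_pow]
    rw [this] at hj2
    calc β * 2 ^ j < (2 * (1 / 2 ^ j)) * 2 ^ j := by
          exact mul_lt_mul_of_pos_right hj2 hP
      _ = 2 := by field_simp
  set a : Fin d → ℤ := fun i => ⌊(x i - β) * 2 ^ j⌋ with ha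
  set b : Fin d → ℤ := fun i => ⌊(x i + β) * 2 ^ j⌋ with hbdef
  set Fs : Finset (ℕ × (Fin d → ℤ)) :=
    (Fintype.piFinset fun i => Finset.Icc (a i) (b i)).image (Prod.mk j) with hFs
  have hcover : T ⊆ ⋃ p ∈ (Fs : Set (ℕ × (Fin d → ℤ))), dyadicCube p.1 p.2 := by
    intro y hy
    have hmem : (j, fun i => ⌊y i * 2 ^ j⌋) ∈ Fs := by
      rw [hFs, Finset.mem_image]
      refine ⟨fun i => ⌊y i * 2 ^ j⌋, ?_, rfl⟩
      rw [Fintype.mem_piFinset]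
      intro i
      have hdist : dist (y i) (x i) ≤ β :=
        (dist_coord_le_dist y x i).trans ((dist_le_diam_of_mem hb hy hx).trans hdiam)
      rw [Real.dist_eq, abs_sub_le_iff] at hdist
      rw [Finset.mem_Icc]
      constructor
      · exact Int.floor_le_floor (by nlinarith [hdist.2])
      · exact Int.floor_le_floor (by nlinarith [hdist.1])
    exact Set.mem_biUnion hmem (mem_dyadicCube_floor j y)
  have hdiamF : ∀ p ∈ Fs, Metric.diam (dyadicCube p.1 p.2) ≤ Real.sqrt d * β := by
    intro p hp
    rw [hFs, Finset.mem_image] at hp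
    obtain ⟨m, _, rfl⟩ := hp
    calc Metric.diam (dyadicCube j m) ≤ Real.sqrt d / 2 ^ j := diam_dyadicCube_le j m
      _ ≤ Real.sqrt d * β := by
          rw [div_le_iff₀ hP]
          have h1 : (1:ℝ) / 2 ^ j ≤ β := by simpa [div_pow] using hj
          calc Real.sqrt d = Real.sqrt d * ((1 / 2 ^ j) * 2 ^ j) := by field_simp
            _ ≤ Real.sqrt d * (β * 2 ^ j) := by
                apply mul_le_mul_of_nonneg_left _ (Real.sqrt_nonneg _)
                exact mul_le_mul_of_nonneg_right h1 hP.le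
            _ = Real.sqrt d * β * 2 ^ j := by ring
  have hcard : Fs.card ≤ 5 ^ d := by
    calc Fs.card ≤ (Fintype.piFinset fun i => Finset.Icc (a i) (b i)).card :=
          Finset.card_image_le
      _ = ∏ i, (Finset.Icc (a i) (b i)).card := Fintype.card_piFinset _
      _ ≤ ∏ _i : Fin d, 5 := by
          apply Finset.prod_le_prod (fun _ _ => Nat.zero_le _)
          intro i _
          have hba : b i ≤ a i + 4 := by
            show ⌊(x i + β) * 2 ^ j⌋ ≤ ⌊(x i - β) * 2 ^ j⌋ + 4
            have heq : (x i + β) * 2 ^ j = (x i - β) * 2 ^ j + 2 * (β * 2 ^ j) := by ring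
            rw [heq]
            calc ⌊(x i - β) * 2 ^ j + 2 * (β * 2 ^ j)⌋ ≤ ⌊(x i - β) * 2 ^ j + 4⌋ :=
                  Int.floor_le_floor (by nlinarith)
              _ = ⌊(x i - β) * 2 ^ j⌋ + 4 := by
                  exact_mod_cast Int.floor_add_intCast ((x i - β) * 2 ^ j) 4
          rw [Int.card_Icc]
          omega
      _ = 5 ^ d := by simp
  refine ⟨Fs, hcover, hdiamF, ?_⟩
  rw [coverSum_finset]
  calc ∑ p ∈ Fs, ENNReal.ofReal (Metric.diam (dyadicCube p.1 p.2) ^ α)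
      ≤ Fs.card • ENNReal.ofReal ((Real.sqrt d * β) ^ α) := by
        apply Finset.sum_le_card_nsmul
        intro p hp
        exact ENNReal.ofReal_le_ofReal
          (Real.rpow_le_rpow Metric.diam_nonneg (hdiamF p hp) hα.le)
    _ ≤ (5 : ℝ≥0∞) ^ d * ENNReal.ofReal ((Real.sqrt d * β) ^ α) := by
        rw [nsmul_eq_mul]
        apply mul_le_mul_left
        calc (Fs.card : ℝ≥0∞) ≤ ((5 ^ d : ℕ) : ℝ≥0∞) := by exact_mod_cast hcard
          _ = (5 : ℝ≥0∞) ^ d := by push_cast; ring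


end NetAux

namespace NetAux

variable {d : ℕ}

theorem exists_small_cover (hd : 0 < d) {α δ ε : ℝ} (hα : 0 < α) (hδ : 0 < δ) (hε : 0 < ε)
    {S : Set (EuclideanSpace ℝ (Fin d))} (hS : μH[α] S = 0) :
    ∃ C : Set (ℕ × (Fin d → ℤ)), IsNetCover δ S C ∧ coverSum d α C ≤ ENNReal.ofReal ε := by
  have hsd : (0:ℝ) < Real.sqrt d := Real.sqrt_pos.2 (by exact_mod_cast hd)
  set c₀ : ℝ := 5 ^ d * Real.sqrt d ^ α with hc₀def
  have hc₀ : 0 < c₀ := by positivity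
  set δ'' : ℝ := min (δ / Real.sqrt d) 1 with hδ''def
  have hδ'' : 0 < δ'' := lt_min (by positivity) one_pos
  have hδ''1 : δ'' ≤ 1 := min_le_right _ _
  have hδ''δ : Real.sqrt d * δ'' ≤ δ := by
    calc Real.sqrt d * δ'' ≤ Real.sqrt d * (δ / Real.sqrt d) :=
          mul_le_mul_of_nonneg_left (min_le_left _ _) hsd.le
      _ = δ := by field_simp
  set ε₂ : ℝ := ε / (4 * c₀) with hε₂def
  have hε₂ : 0 < ε₂ := by positivity
  -- extract a Hausdorff cover
  rw [MeasureTheory.Measure.hausdorffMeasure_apply] at hS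
  have h2 : (⨅ (t : ℕ → Set (EuclideanSpace ℝ (Fin d))) (_ : S ⊆ ⋃ n, t n)
      (_ : ∀ n, EMetric.diam (t n) ≤ ENNReal.ofReal δ''),
      ∑' n, ⨆ _ : (t n).Nonempty, EMetric.diam (t n) ^ α) = 0 := by
    refine le_antisymm ?_ zero_le
    rw [← hS]
    exact le_iSup₂ (f := fun (r : ℝ≥0∞) (_ : 0 < r) =>
      ⨅ (t : ℕ → Set (EuclideanSpace ℝ (Fin d))) (_ : S ⊆ ⋃ n, t n)
        (_ : ∀ n, EMetric.diam (t n) ≤ r),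
        ∑' n, ⨆ _ : (t n).Nonempty, EMetric.diam (t n) ^ α)
      (ENNReal.ofReal δ'') (ENNReal.ofReal_pos.2 hδ'')
  have h3 : (⨅ (t : ℕ → Set (EuclideanSpace ℝ (Fin d))) (_ : S ⊆ ⋃ n, t n)
      (_ : ∀ n, EMetric.diam (t n) ≤ ENNReal.ofReal δ''),
      ∑' n, ⨆ _ : (t n).Nonempty, EMetric.diam (t n) ^ α) < ENNReal.ofReal (ε / (2 * c₀)) := by
    rw [h2]
    exact ENNReal.ofReal_pos.2 (by positivity)
  simp only [iInf_lt_iff] at h3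
  obtain ⟨t, hcov, hdiam, hsum⟩ := h3
  -- per-n facts
  have hedne : ∀ n, EMetric.diam (t n) ≠ ⊤ :=
    fun n => ne_top_of_le_ne_top ENNReal.ofReal_ne_top (hdiam n)
  have hbdd : ∀ n, Bornology.IsBounded (t n) :=
    fun n => Metric.isBounded_iff_ediam_ne_top.2 (hedne n)
  have hdiam' : ∀ n, Metric.diam (t n) ≤ δ'' :=
    fun n => ENNReal.toReal_le_of_le_ofReal hδ''.le (hdiam n)
  set ρ : ℕ → ℝ := fun n => min δ'' ((ε₂ / 2 ^ n) ^ (α⁻¹)) with hρdef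
  have hρpos : ∀ n, 0 < ρ n := fun n =>
    lt_min hδ'' (Real.rpow_pos_of_pos (by positivity) _)
  have hρle : ∀ n, ρ n ^ α ≤ ε₂ / 2 ^ n := by
    intro n
    have h1 : ρ n ≤ (ε₂ / 2 ^ n) ^ (α⁻¹) := min_le_right _ _
    calc ρ n ^ α ≤ ((ε₂ / 2 ^ n) ^ (α⁻¹)) ^ α :=
          Real.rpow_le_rpow (hρpos n).le h1 hα.le
      _ = (ε₂ / 2 ^ n) ^ (α⁻¹ * α) := by
          rw [← Real.rpow_mul (by positivity)]
      _ = ε₂ / 2 ^ n := by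
          rw [inv_mul_cancel₀ hα.ne', Real.rpow_one]
  -- choose finite covers
  set B : ℕ → ℝ≥0∞ := fun n => ENNReal.ofReal c₀ *
    ((⨆ _ : (t n).Nonempty, EMetric.diam (t n) ^ α) + ENNReal.ofReal (ε₂ / 2 ^ n)) with hBdef
  have hF : ∀ n, ∃ F : Finset (ℕ × (Fin d → ℤ)),
      (t n ⊆ ⋃ p ∈ (F : Set (ℕ × (Fin d → ℤ))), dyadicCube p.1 p.2) ∧
      (∀ p ∈ F, Metric.diam (dyadicCube p.1 p.2) ≤ δ) ∧
      coverSum d α (F : Set (ℕ × (Fin d → ℤ))) ≤ B n := by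
    intro n
    by_cases hne : (t n).Nonempty
    · set β : ℝ := max (Metric.diam (t n)) (ρ n) with hβdef
      have hβ0 : 0 < β := lt_of_lt_of_le (hρpos n) (le_max_right _ _)
      have hβ1 : β ≤ 1 := max_le ((hdiam' n).trans hδ''1) ((min_le_left _ _).trans hδ''1)
      have hβδ'' : β ≤ δ'' := max_le (hdiam' n) (min_le_left _ _)
      obtain ⟨F, hF1, hF2, hF3⟩ := cover_one_set hd hα hne (hbdd n) hβ0 hβ1 (le_max_left _ _)
      refine ⟨F, hF1, fun p hp => (hF2 p hp).trans ?_, ?_⟩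
      · calc Real.sqrt d * β ≤ Real.sqrt d * δ'' :=
              mul_le_mul_of_nonneg_left hβδ'' hsd.le
          _ ≤ δ := hδ''δ
      · refine hF3.trans ?_
        have hsplit : (Real.sqrt d * β) ^ α = Real.sqrt d ^ α * β ^ α :=
          Real.mul_rpow hsd.le hβ0.le
        have hβα : β ^ α ≤ Metric.diam (t n) ^ α + ε₂ / 2 ^ n := by
          rcases max_choice (Metric.diam (t n)) (ρ n) with h | h
          · rw [hβdef, h]
            have : (0:ℝ) ≤ ε₂ / 2 ^ n := by positivity
            linarith [this]
          · rw [hβdef, h]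
            have h1 : (0:ℝ) ≤ Metric.diam (t n) ^ α :=
              Real.rpow_nonneg Metric.diam_nonneg _
            linarith [hρle n]
        have hofReal : ENNReal.ofReal (Metric.diam (t n) ^ α)
            = ⨆ _ : (t n).Nonempty, EMetric.diam (t n) ^ α := by
          rw [iSup_pos hne]
          rw [← ENNReal.ofReal_rpow_of_nonneg Metric.diam_nonneg hα.le]
          congr 1
          exact (ENNReal.ofReal_toReal (hedne n))  -- ofReal (diam) = ediam
        have h5 : (5:ℝ≥0∞) ^ d = ENNReal.ofReal ((5:ℝ) ^ d) := by
          rw [ENNReal.ofReal_pow (by norm_num)]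
          norm_num
        have e1 : (5:ℝ≥0∞) ^ d * ENNReal.ofReal ((Real.sqrt d * β) ^ α)
            = ENNReal.ofReal (5 ^ d * (Real.sqrt d ^ α * β ^ α)) := by
          rw [hsplit, h5, ← ENNReal.ofReal_mul (by positivity)]
        calc (5:ℝ≥0∞) ^ d * ENNReal.ofReal ((Real.sqrt d * β) ^ α)
            = ENNReal.ofReal c₀ * ENNReal.ofReal (β ^ α) := by
              rw [e1, ← ENNReal.ofReal_mul hc₀.le]
              congr 1
              rw [hc₀def]
              ring
          _ ≤ ENNReal.ofReal c₀ *
                (ENNReal.ofReal (Metric.diam (t n) ^ α) + ENNReal.ofReal (ε₂ / 2 ^ n)) := by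
              apply mul_le_mul_right
              rw [← ENNReal.ofReal_add (Real.rpow_nonneg Metric.diam_nonneg _) (by positivity)]
              exact ENNReal.ofReal_le_ofReal hβα
          _ = B n := by rw [hBdef, hofReal]
    · refine ⟨∅, by simp [Set.not_nonempty_iff_eq_empty.1 hne], by simp, ?_⟩
      have : coverSum d α ((∅ : Finset (ℕ × (Fin d → ℤ))) : Set (ℕ × (Fin d → ℤ))) = 0 := by
        rw [coverSum_finset]; simp
      rw [this]
      exact zero_le
  choose F hF1 hF2 hF3 using hF
  refine ⟨⋃ n, (F n : Set (ℕ × (Fin d → ℤ))), ⟨?_, ?_, ?_⟩, ?_⟩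
  · exact countable_iUnion fun n => (F n).countable_toSet
  · intro x hx
    obtain ⟨n, hn⟩ := Set.mem_iUnion.1 (hcov hx)
    obtain ⟨p, hp, hpx⟩ := Set.mem_iUnion₂.1 (hF1 n hn)
    exact Set.mem_iUnion₂.2 ⟨p, Set.mem_iUnion.2 ⟨n, hp⟩, hpx⟩
  · intro p hp
    obtain ⟨n, hn⟩ := Set.mem_iUnion.1 hp
    exact hF2 n p hn
  · have hle : coverSum d α (⋃ n, (F n : Set (ℕ × (Fin d → ℤ))))
        ≤ ∑' n, coverSum d α (F n : Set (ℕ × (Fin d → ℤ))) := by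
      simp only [coverSum]
      apply ENNReal.tsum_iUnion_le_tsum
        (fun q => ENNReal.ofReal (Metric.diam (dyadicCube q.1 q.2) ^ α))
        (fun n => (F n : Set (ℕ × (Fin d → ℤ))))
    have hgeo : ∑' n : ℕ, ENNReal.ofReal (ε₂ / 2 ^ n) = ENNReal.ofReal ε₂ * 2 := by
      have heach : ∀ n : ℕ, ENNReal.ofReal (ε₂ / 2 ^ n)
          = ENNReal.ofReal ε₂ * (2⁻¹ : ℝ≥0∞) ^ n := by
        intro n
        rw [div_eq_mul_inv, ← inv_pow, ENNReal.ofReal_mul hε₂.le,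
          ENNReal.ofReal_pow (by norm_num), ENNReal.ofReal_inv_of_pos (by norm_num)]
        norm_num
      rw [tsum_congr heach, ENNReal.tsum_mul_left, ENNReal.tsum_geometric]
      congr 1
      rw [ENNReal.one_sub_inv_two, inv_inv]
  
    calc coverSum d α (⋃ n, (F n : Set (ℕ × (Fin d → ℤ))))
        ≤ ∑' n, coverSum d α (F n : Set (ℕ × (Fin d → ℤ))) := hle
      _ ≤ ∑' n, B n := ENNReal.tsum_le_tsum hF3
      _ = ENNReal.ofReal c₀ * ((∑' n, ⨆ _ : (t n).Nonempty, EMetric.diam (t n) ^ α)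
            + ENNReal.ofReal ε₂ * 2) := by
          rw [hBdef, ENNReal.tsum_mul_left, ENNReal.tsum_add, hgeo]
      _ ≤ ENNReal.ofReal c₀ * (ENNReal.ofReal (ε / (2 * c₀)) + ENNReal.ofReal (2 * ε₂)) := by
          apply mul_le_mul_right
          apply add_le_add hsum.le
          have h2ε : ENNReal.ofReal ε₂ * 2 = ENNReal.ofReal (2 * ε₂) := by
            rw [ENNReal.ofReal_mul (by norm_num : (0:ℝ) ≤ 2), ENNReal.ofReal_ofNat, mul_comm]
          exact h2ε.le
      _ = ENNReal.ofReal ε := by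
          rw [← ENNReal.ofReal_add (by positivity) (by positivity),
            ← ENNReal.ofReal_mul hc₀.le]
          congr 1
          rw [hε₂def]
          field_simp
          ring
  

theorem continuous_coord (i : Fin d) : Continuous fun x : EuclideanSpace ℝ (Fin d) => x i := by
  apply Continuous.comp (continuous_apply i) (PiLp.continuous_ofLp (p := 2) (β := fun _ : Fin d => ℝ))

theorem netPre_lt_top (hd : 0 < d) {s δ : ℝ} (hδ : 0 < δ)
    {E : Set (EuclideanSpace ℝ (Fin d))} (hE : Bornology.IsBounded E) :
    netPre s δ E < ⊤ := by
  have hsd : (0:ℝ) < Real.sqrt d := Real.sqrt_pos.2 (by exact_mod_cast hd)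
  obtain ⟨j, hj⟩ : ∃ j : ℕ, (1/2 : ℝ) ^ j ≤ δ / Real.sqrt d := by
    obtain ⟨n, hn⟩ := exists_pow_lt_of_lt_one (x := δ / Real.sqrt d) (by positivity)
      (by norm_num : (1/2 : ℝ) < 1)
    exact ⟨n, hn.le⟩
  have hP : (0:ℝ) < 2 ^ j := by positivity
  have hdiamj : Real.sqrt d / 2 ^ j ≤ δ := by
    rw [div_le_iff₀ hP]
    have h1 : (1:ℝ) / 2 ^ j ≤ δ / Real.sqrt d := by simpa [div_pow] using hj
    calc Real.sqrt d = Real.sqrt d * ((1 / 2 ^ j) * 2 ^ j) := by field_simp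
      _ ≤ Real.sqrt d * ((δ / Real.sqrt d) * 2 ^ j) := by
          apply mul_le_mul_of_nonneg_left _ hsd.le
          exact mul_le_mul_of_nonneg_right h1 hP.le
      _ = δ * 2 ^ j := by field_simp
  obtain ⟨R, hR⟩ := hE.subset_closedBall 0
  set Fs : Finset (ℕ × (Fin d → ℤ)) :=
    (Fintype.piFinset fun _ : Fin d => Finset.Icc ⌊(-R) * 2 ^ j⌋ ⌊R * 2 ^ j⌋).image
      (Prod.mk j) with hFs
  have hcover : IsNetCover δ E (Fs : Set (ℕ × (Fin d → ℤ))) := by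
    refine ⟨Fs.countable_toSet, ?_, ?_⟩
    · intro x hx
      have hmem : (j, fun i => ⌊x i * 2 ^ j⌋) ∈ Fs := by
        rw [hFs, Finset.mem_image]
        refine ⟨fun i => ⌊x i * 2 ^ j⌋, ?_, rfl⟩
        rw [Fintype.mem_piFinset]
        intro i
        have hxi : |x i| ≤ R := by
          have h0 : dist (x i) ((0 : EuclideanSpace ℝ (Fin d)) i) ≤ dist x 0 :=
            dist_coord_le_dist x 0 i
          have h0' : ((0 : EuclideanSpace ℝ (Fin d)) i) = 0 := rfl
          rw [h0', Real.dist_eq, sub_zero] at h0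
          exact h0.trans (mem_closedBall.1 (hR hx))
        rw [abs_le] at hxi
        rw [Finset.mem_Icc]
        exact ⟨Int.floor_le_floor (by nlinarith), Int.floor_le_floor (by nlinarith)⟩
      exact Set.mem_biUnion hmem (mem_dyadicCube_floor j x)
    · intro p hp
      rw [hFs, Finset.coe_image] at hp
      obtain ⟨m, _, rfl⟩ := hp
      exact (diam_dyadicCube_le j _).trans hdiamj
  calc netPre s δ E ≤ coverSum d s (Fs : Set (ℕ × (Fin d → ℤ))) := netPre_le_coverSum hcover
    _ < ⊤ := by
        rw [coverSum_finset]
        exact ENNReal.sum_lt_top.2 fun p _ => ENNReal.ofReal_lt_top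

theorem slab_small {α δ : ℝ} (hd : 0 < d) (hα : 0 < α) (hδ : 0 < δ)
    {K L : Set (EuclideanSpace ℝ (Fin d))} (hLc : IsCompact L) (hL : L ⊆ K)
    (i₀ : Fin d) (a : ℝ) (hnull : μH[α] (K ∩ {x : EuclideanSpace ℝ (Fin d) | x i₀ = a}) = 0)
    {ε : ℝ} (hε : 0 < ε) :
    ∃ η : ℝ, 0 < η ∧
      netPre α δ (L ∩ {x : EuclideanSpace ℝ (Fin d) | |x i₀ - a| ≤ η}) ≤ ENNReal.ofReal ε := by
  obtain ⟨C, hC, hCsum⟩ := exists_small_cover hd hα hδ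
    (show (0:ℝ) < ε / 3 ^ d by positivity) hnull
  set f : (ℕ × (Fin d → ℤ)) → ℝ≥0∞ :=
    fun q => ENNReal.ofReal (Metric.diam (dyadicCube q.1 q.2) ^ α) with hf
  set Ebox : Finset (Fin d → ℤ) := Fintype.piFinset fun _ : Fin d => Finset.Icc (-1 : ℤ) 1
    with hEbox
  set φ : (Fin d → ℤ) → (ℕ × (Fin d → ℤ)) → (ℕ × (Fin d → ℤ)) :=
    fun e p => (p.1, fun i => p.2 i + e i) with hφ
  set C' : Set (ℕ × (Fin d → ℤ)) := ⋃ e ∈ (Ebox : Set (Fin d → ℤ)), φ e '' C with hC'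
  set U : Set (EuclideanSpace ℝ (Fin d)) := ⋃ p ∈ C,
    {x : EuclideanSpace ℝ (Fin d) |
      ∀ i, ((p.2 i : ℝ) - 1) / 2 ^ p.1 < x i ∧ x i < ((p.2 i : ℝ) + 2) / 2 ^ p.1} with hU
  -- U is open
  have hUopen : IsOpen U := by
    refine isOpen_biUnion fun p _ => ?_
    have : {x : EuclideanSpace ℝ (Fin d) |
        ∀ i, ((p.2 i : ℝ) - 1) / 2 ^ p.1 < x i ∧ x i < ((p.2 i : ℝ) + 2) / 2 ^ p.1}
        = ⋂ i, (fun x : EuclideanSpace ℝ (Fin d) => x i) ⁻¹'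
          (Set.Ioo (((p.2 i : ℝ) - 1) / 2 ^ p.1) (((p.2 i : ℝ) + 2) / 2 ^ p.1)) := by
      ext x
      simp [Set.mem_iInter, Set.mem_Ioo]
    rw [this]
    exact isOpen_iInter_of_finite fun i =>
      (isOpen_Ioo).preimage (continuous_coord i)
  -- cubes are inside their open neighborhoods
  have hsubU : ∀ p ∈ C, dyadicCube p.1 p.2 ⊆ U := by
    intro p hp x hx
    refine Set.mem_biUnion hp fun i => ?_
    have h := hx i
    have hP : (0:ℝ) < 2 ^ p.1 := by positivity
    constructor
    · calc ((p.2 i : ℝ) - 1) / 2 ^ p.1 < (p.2 i : ℝ) / 2 ^ p.1 := by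
            gcongr
            linarith
          _ ≤ x i := h.1
    · calc x i < ((p.2 i : ℝ) + 1) / 2 ^ p.1 := h.2
        _ ≤ ((p.2 i : ℝ) + 2) / 2 ^ p.1 := by
            gcongr
            linarith
  -- U is covered by the enlarged cubes
  have hUsub : U ⊆ ⋃ q ∈ C', dyadicCube q.1 q.2 := by
    intro x hx
    obtain ⟨p, hp, hxp⟩ := Set.mem_iUnion₂.1 hx
    have hP : (0:ℝ) < 2 ^ p.1 := by positivity
    set e : Fin d → ℤ := fun i => ⌊x i * 2 ^ p.1⌋ - p.2 i with he
    have heE : e ∈ Ebox := by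
      rw [hEbox, Fintype.mem_piFinset]
      intro i
      have h1 := (hxp i).1
      have h2 := (hxp i).2
      rw [div_lt_iff₀ hP] at h1
      rw [lt_div_iff₀ hP] at h2
      have hub : ⌊x i * 2 ^ p.1⌋ ≤ p.2 i + 1 := by
        have : x i * 2 ^ p.1 < ((p.2 i + 2 : ℤ) : ℝ) := by push_cast; linarith
        have := Int.floor_lt.2 this
        omega
      have hlb : p.2 i - 1 ≤ ⌊x i * 2 ^ p.1⌋ := by
        apply Int.le_floor.2
        push_cast
        linarith
      rw [Finset.mem_Icc, he]
      simp only []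
      omega
    have hqmem : φ e p ∈ C' := by
      rw [hC']
      exact Set.mem_biUnion heE ⟨p, hp, rfl⟩
    refine Set.mem_biUnion hqmem ?_
    have : (φ e p).2 = fun i => ⌊x i * 2 ^ p.1⌋ := by
      funext i
      rw [hφ, he]
      simp only []
      ring
    show x ∈ dyadicCube (φ e p).1 (φ e p).2
    rw [this]
    exact mem_dyadicCube_floor p.1 x
  -- coverSum of C' is controlled
  have hC'sum : coverSum d α C' ≤ (3:ℝ≥0∞) ^ d * coverSum d α C := by
    have h1 : coverSum d α C' ≤ ∑ e ∈ Ebox, ∑' q : (φ e '' C), f (q : ℕ × (Fin d → ℤ)) := by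
      simp only [coverSum, hC']
      apply ENNReal.tsum_biUnion_le f Ebox (fun e => φ e '' C)
    have h2 : ∀ e, (∑' q : (φ e '' C), f (q : ℕ × (Fin d → ℤ))) ≤ coverSum d α C := by
      intro e
      have hsurj : Function.Surjective
          (fun p : C => (⟨φ e p, Set.mem_image_of_mem _ p.2⟩ : φ e '' C)) := by
        rintro ⟨q, p, hp, rfl⟩
        exact ⟨⟨p, hp⟩, rfl⟩
      calc (∑' q : (φ e '' C), f (q : ℕ × (Fin d → ℤ)))
          ≤ ∑' p : C, f (φ e (p : ℕ × (Fin d → ℤ))) :=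
            ENNReal.tsum_le_tsum_comp_of_surjective hsurj
              (fun q : (φ e '' C) => f (q : ℕ × (Fin d → ℤ)))
        _ = coverSum d α C := by
            apply tsum_congr
            intro p
            simp only [hf, coverSum]
            congr 2
            exact diam_dyadicCube_eq _ _ _
    calc coverSum d α C' ≤ ∑ e ∈ Ebox, ∑' q : (φ e '' C), f (q : ℕ × (Fin d → ℤ)) := h1
      _ ≤ ∑ _e ∈ Ebox, coverSum d α C := Finset.sum_le_sum fun e _ => h2 e
      _ = Ebox.card • coverSum d α C := (Finset.sum_const _)
      _ = (Ebox.card : ℝ≥0∞) * coverSum d α C := nsmul_eq_mul _ _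
      _ = (3:ℝ≥0∞) ^ d * coverSum d α C := by
          have hcard : Ebox.card = 3 ^ d := by
            rw [hEbox, Fintype.card_piFinset]
            simp [Int.card_Icc, Finset.prod_const]
          rw [hcard]
          congr 1
          push_cast
          ring
  have hC'small : coverSum d α C' ≤ ENNReal.ofReal ε := by
    refine hC'sum.trans ?_
    calc (3:ℝ≥0∞) ^ d * coverSum d α C ≤ (3:ℝ≥0∞) ^ d * ENNReal.ofReal (ε / 3 ^ d) :=
          mul_le_mul_right hCsum _
      _ = ENNReal.ofReal ε := by
          have h3 : (3:ℝ≥0∞) ^ d = ENNReal.ofReal ((3:ℝ) ^ d) := by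
            rw [ENNReal.ofReal_pow (by norm_num)]
            norm_num
          rw [h3, ← ENNReal.ofReal_mul (by positivity)]
          congr 1
          field_simp
  -- the slice is inside U
  have hsliceU : K ∩ {x : EuclideanSpace ℝ (Fin d) | x i₀ = a} ⊆ U := by
    intro x hx
    obtain ⟨p, hp, hxp⟩ := Set.mem_iUnion₂.1 (hC.2.1 hx)
    exact hsubU p hp hxp
  -- compactness argument
  set A : ℕ → Set (EuclideanSpace ℝ (Fin d)) :=
    fun n => L ∩ {x : EuclideanSpace ℝ (Fin d) | |x i₀ - a| ≤ 1 / (n + 1)} with hA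
  have hAclosed : ∀ c : ℝ, IsClosed {x : EuclideanSpace ℝ (Fin d) | |x i₀ - a| ≤ c} := by
    intro c
    have hcont : Continuous fun x : EuclideanSpace ℝ (Fin d) => |x i₀ - a| :=
      ((continuous_coord i₀).sub continuous_const).abs
    exact isClosed_le hcont continuous_const
  have hAcompact : ∀ n, IsCompact (A n) := fun n => hLc.inter_right (hAclosed _)
  have hAanti : Antitone A := by
    intro m n hmn
    apply Set.inter_subset_inter_right
    intro x hx
    simp only [Set.mem_setOf_eq] at hx ⊢
    refine le_trans hx ?_
    have hcast : (m : ℝ) ≤ (n : ℝ) := Nat.cast_le.2 hmn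
    rw [div_le_div_iff₀ (by positivity) (by positivity)]
    linarith
  have hexU : ∃ n, A n ⊆ U := by
    by_contra hcon
    push_neg at hcon
    have hne : ∀ n, (A n ∩ Uᶜ).Nonempty := by
      intro n
      obtain ⟨x, hx1, hx2⟩ := Set.not_subset.1 (hcon n)
      exact ⟨x, hx1, hx2⟩
    have hdir : Directed (· ⊇ ·) fun n => A n ∩ Uᶜ := by
      intro m n
      exact ⟨max m n, Set.inter_subset_inter_left _ (hAanti (le_max_left m n)),
        Set.inter_subset_inter_left _ (hAanti (le_max_right m n))⟩
    obtain ⟨x, hx⟩ := IsCompact.nonempty_iInter_of_directed_nonempty_isCompact_isClosed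
      (fun n => A n ∩ Uᶜ) hdir hne
      (fun n => (hAcompact n).inter_right hUopen.isClosed_compl)
      (fun n => ((hAcompact n).isClosed).inter hUopen.isClosed_compl)
    have hxall := Set.mem_iInter.1 hx
    have hxL : x ∈ L := (hxall 0).1.1
    have hxU : x ∉ U := (hxall 0).2
    have hxa : x i₀ = a := by
      by_contra hne'
      have habs : 0 < |x i₀ - a| := abs_pos.2 (sub_ne_zero.2 hne')
      obtain ⟨n, hn⟩ := exists_nat_one_div_lt habs
      exact absurd ((hxall n).1.2) (not_le.2 hn)
    exact hxU (hsliceU ⟨hL hxL, hxa⟩)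
  obtain ⟨n, hn⟩ := hexU
  refine ⟨1 / (n + 1), by positivity, ?_⟩
  have hcover : IsNetCover δ (A n) C' := by
    refine ⟨?_, (hn.trans hUsub), ?_⟩
    · rw [hC']
      exact (Ebox : Set (Fin d → ℤ)).to_countable.biUnion fun e _ => hC.1.image (φ e)
    · intro q hq
      rw [hC'] at hq
      obtain ⟨e, -, p, hp, rfl⟩ := Set.mem_iUnion₂.1 hq
      exact le_of_eq_of_le (diam_dyadicCube_eq _ _ _) (hC.2.2 p hp)
  have : netPre α δ (A n) ≤ coverSum d α C' := netPre_le_coverSum hcover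
  exact this.trans hC'small


theorem toReal_abs_sub_le {b c : ℝ≥0∞} {e : ℝ} (hb : b ≠ ⊤) (hc : c ≠ ⊤) (he : 0 ≤ e)
    (h1 : b ≤ c + ENNReal.ofReal e) (h2 : c ≤ b + ENNReal.ofReal e) :
    |b.toReal - c.toReal| ≤ e := by
  have key : ∀ {x y : ℝ≥0∞}, x ≠ ⊤ → y ≠ ⊤ → x ≤ y + ENNReal.ofReal e →
      x.toReal - y.toReal ≤ e := by
    intro x y hx hy hxy
    have h := ENNReal.toReal_mono (ENNReal.add_ne_top.2 ⟨hy, ENNReal.ofReal_ne_top⟩) hxy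
    rw [ENNReal.toReal_add hy ENNReal.ofReal_ne_top, ENNReal.toReal_ofReal he] at h
    linarith
  rw [abs_sub_le_iff]
  exact ⟨key hb hc h1, key hc hb h2⟩

end NetAux

theorem netPre_halfspace_continuous
    {d : ℕ} (hd : 0 < d) (K : Set (EuclideanSpace ℝ (Fin d))) (hK : IsCompact K)
    (α : ℝ) (hα : 0 < α)
    (hslice : ∀ a : ℝ, μH[α] (K ∩ {x : EuclideanSpace ℝ (Fin d) | x ⟨0, hd⟩ = a}) = 0)
    (L : Set (EuclideanSpace ℝ (Fin d))) (hL : L ⊆ K) (hLc : IsCompact L)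
    (k : ℕ) (hk : 0 < k) :
    Continuous fun u : ℝ =>
      (netPre α ((2 : ℝ) ^ (-(k : ℤ)))
        (L ∩ {x : EuclideanSpace ℝ (Fin d) | x ⟨0, hd⟩ ≤ u})).toReal := by
  classical
  set δ : ℝ := (2 : ℝ) ^ (-(k : ℤ)) with hδdef
  have hδ : 0 < δ := by positivity
  set i₀ : Fin d := ⟨0, hd⟩ with hi₀
  set g : ℝ → ℝ≥0∞ :=
    fun u => netPre α δ (L ∩ {x : EuclideanSpace ℝ (Fin d) | x i₀ ≤ u}) with hg
  have hfin : ∀ u, g u ≠ ⊤ := by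
    intro u
    have hmono : g u ≤ netPre α δ L := NetAux.netPre_mono Set.inter_subset_left
    exact (hmono.trans_lt (NetAux.netPre_lt_top hd hδ hLc.isBounded)).ne
  have hgmono : ∀ v w : ℝ, v ≤ w → g v ≤ g w := by
    intro v w hvw
    apply NetAux.netPre_mono
    exact Set.inter_subset_inter_right _ fun x hx => le_trans hx hvw
  rw [Metric.continuous_iff]
  intro a ε hε
  obtain ⟨η, hη, hslab⟩ := NetAux.slab_small hd hα hδ hLc hL i₀ a (hslice a)
    (show (0:ℝ) < ε / 2 by linarith)
  refine ⟨η, hη, fun u hu => ?_⟩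
  rw [Real.dist_eq] at hu
  have key : ∀ v w : ℝ, v ≤ w → |v - a| < η → |w - a| < η →
      g w ≤ g v + ENNReal.ofReal (ε / 2) := by
    intro v w hvw hva hwa
    have hsub : L ∩ {x : EuclideanSpace ℝ (Fin d) | x i₀ ≤ w} ⊆
        (L ∩ {x : EuclideanSpace ℝ (Fin d) | x i₀ ≤ v}) ∪
        (L ∩ {x : EuclideanSpace ℝ (Fin d) | |x i₀ - a| ≤ η}) := by
      rintro x ⟨hxL, hxw⟩
      simp only [Set.mem_setOf_eq] at hxw
      by_cases hxv : x i₀ ≤ v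
      · exact Or.inl ⟨hxL, hxv⟩
      · push_neg at hxv
        refine Or.inr ⟨hxL, ?_⟩
        simp only [Set.mem_setOf_eq]
        rw [abs_sub_le_iff]
        rw [abs_lt] at hva hwa
        constructor <;> linarith
    calc g w ≤ netPre α δ ((L ∩ {x : EuclideanSpace ℝ (Fin d) | x i₀ ≤ v}) ∪
          (L ∩ {x : EuclideanSpace ℝ (Fin d) | |x i₀ - a| ≤ η})) :=
          NetAux.netPre_mono hsub
      _ ≤ g v + netPre α δ (L ∩ {x : EuclideanSpace ℝ (Fin d) | |x i₀ - a| ≤ η}) :=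
          NetAux.netPre_union_le _ _
      _ ≤ g v + ENNReal.ofReal (ε / 2) := add_le_add_right hslab _
  have haa : |a - a| < η := by simpa using hη
  have h1 : g u ≤ g a + ENNReal.ofReal (ε / 2) := by
    rcases le_total u a with h | h
    · exact (hgmono u a h).trans (le_add_right le_rfl)
    · exact key a u h haa hu
  have h2 : g a ≤ g u + ENNReal.ofReal (ε / 2) := by
    rcases le_total u a with h | h
    · exact key u a h hu haa
    · exact (hgmono a u h).trans (le_add_right le_rfl)
  have habs : |(g u).toReal - (g a).toReal| ≤ ε / 2 :=
    NetAux.toReal_abs_sub_le (hfin u) (hfin a) (by linarith) h1 h2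
  rw [Real.dist_eq]
  calc |(g u).toReal - (g a).toReal| ≤ ε / 2 := habs
    _ < ε := by linarith
end

section
/- Let K be an infinite compact subset of ℝ^d, let E be a compact subset of K and let α > 0. Assume H^α(E) < +∞. Then there exists a dense G_δ subset R_E of P(K) such that every μ ∈ R_E satisfies: for every x ∈ E, the lower local dimension dim_loc^-(μ;x) is at most α. -/
open MeasureTheory Filter Metric Set Topology
open scoped ENNReal

/-- The lower local dimension of a measure at a point:
`liminf_{r → 0⁺} log μ(B(x,r)) / log r`. -/
noncomputable def lowerLocalDim {X : Type*} [MetricSpace X] [MeasurableSpace X]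
    (μ : Measure X) (x : X) : EReal :=
  Filter.liminf (fun r : ℝ => ENNReal.log (μ (Metric.ball x r)) / (Real.log r : EReal))
    (nhdsWithin 0 (Set.Ioi 0))

/-- A probability measure on the subtype `↥K`, viewed as a Borel measure on `ℝ^d`. -/
noncomputable def measOn {d : ℕ} {K : Set (EuclideanSpace ℝ (Fin d))}
    (μ : ProbabilityMeasure K) : Measure (EuclideanSpace ℝ (Fin d)) :=
  (μ : Measure K).map Subtype.val

section Aux

lemma aux_EReal_le (x : EReal) (a : ℝ) (h : ∀ δ : ℝ, 0 < δ → x ≤ ((a + δ : ℝ) : EReal)) :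
    x ≤ (a : EReal) := by
  by_contra h'
  push_neg at h'
  obtain ⟨z, hz1, hz2⟩ := EReal.exists_between_coe_real h'
  have := h (z - a) (by exact_mod_cast sub_pos.mpr (by exact_mod_cast hz1))
  rw [show a + (z - a) = z by ring] at this
  exact absurd (this.trans_lt hz2) (lt_irrefl _)

variable {d : ℕ} {K : Set (EuclideanSpace ℝ (Fin d))}

lemma isOpen_measure_gt {G : Set (EuclideanSpace ℝ (Fin d))} (hG : IsOpen G) (c : ℝ≥0∞) :
    IsOpen {ν : ProbabilityMeasure ↥K | c < (ν : Measure ↥K) (Subtype.val ⁻¹' G)} := by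
  have hpre : IsOpen (Subtype.val ⁻¹' G : Set ↥K) := hG.preimage continuous_subtype_val
  rw [← isClosed_compl_iff]
  have hcompl : {ν : ProbabilityMeasure ↥K | c < (ν : Measure ↥K) (Subtype.val ⁻¹' G)}ᶜ
      = {ν : ProbabilityMeasure ↥K | (ν : Measure ↥K) (Subtype.val ⁻¹' G) ≤ c} := by
    ext ν; simp [not_lt]
  rw [hcompl]
  apply IsSeqClosed.isClosed
  intro νs ν hmem hlim
  exact (ProbabilityMeasure.le_liminf_measure_open_of_tendsto hlim hpre).trans
    (Filter.liminf_le_of_frequently_le (Frequently.of_forall hmem) (by isBoundedDefault))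

lemma isOpen_U_s14 {E : Set (EuclideanSpace ℝ (Fin d))} (hE : IsCompact E) {β : ℝ} (hβ : 0 < β)
    (c : ℝ) :
    IsOpen {μ : ProbabilityMeasure ↥K | ∀ x ∈ E, ∃ r : ℝ, 0 < r ∧ r < c ∧
      ENNReal.ofReal (r ^ β) < (μ : Measure ↥K) (Subtype.val ⁻¹' ball x r)} := by
  classical
  rw [isOpen_iff_forall_mem_open]
  intro μ hμ
  have hch : ∀ x ∈ E, ∃ r θ : ℝ, 0 < r ∧ 0 < θ ∧ r + 2*θ < c ∧
      ENNReal.ofReal ((r + 2*θ) ^ β) < (μ : Measure ↥K) (Subtype.val ⁻¹' ball x r) := by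
    intro x hx
    obtain ⟨r, hr0, hrc, hrlt⟩ := hμ x hx
    set v : ℝ≥0∞ := (μ : Measure ↥K) (Subtype.val ⁻¹' ball x r) with hv
    have hvne : v ≠ ⊤ := (measure_lt_top _ _).ne
    have hv' : r ^ β < v.toReal :=
      (ENNReal.ofReal_lt_iff_lt_toReal (by positivity) hvne).mp hrlt
    have hcont0 : ContinuousAt (fun θ : ℝ => (r + 2*θ) ^ β) 0 :=
      ContinuousAt.rpow_const (by fun_prop) (Or.inr hβ.le)
    have hval : ((fun θ : ℝ => (r + 2*θ) ^ β) 0) = r ^ β := by norm_num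
    have hcont : Tendsto (fun θ : ℝ => (r + 2*θ) ^ β) (𝓝[>] (0:ℝ)) (𝓝 (r ^ β)) := by
      rw [← hval]; exact hcont0.tendsto.mono_left nhdsWithin_le_nhds
    have h2 : ∀ᶠ θ in 𝓝[>] (0:ℝ), (r + 2*θ) ^ β < v.toReal := hcont.eventually_lt_const hv'
    have h3 : ∀ᶠ θ in 𝓝[>] (0:ℝ), θ < (c - r)/2 :=
      (tendsto_id.mono_right nhdsWithin_le_nhds).eventually_lt_const (by linarith)
    have h4 : ∀ᶠ θ in 𝓝[>] (0:ℝ), (0:ℝ) < θ := eventually_mem_nhdsWithin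
    obtain ⟨θ, ⟨hθ0, hθc⟩, hθv⟩ := ((h4.and h3).and h2).exists
    refine ⟨r, θ, hr0, hθ0, by linarith, ?_⟩
    exact (ENNReal.ofReal_lt_iff_lt_toReal (by positivity) hvne).mpr hθv
  choose! r θ hr0 hθ0 hrc hrlt using hch
  obtain ⟨F, hFE, hFfin, hFcov⟩ := hE.elim_finite_subcover_image
    (fun x (_ : x ∈ E) => isOpen_ball (x := x) (ε := θ x))
    (fun x hx => mem_iUnion₂.mpr ⟨x, hx, mem_ball_self (hθ0 x hx)⟩)
  refine ⟨⋂ x ∈ F, {ν : ProbabilityMeasure ↥K |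
      ENNReal.ofReal ((r x + 2*θ x) ^ β) < (ν : Measure ↥K) (Subtype.val ⁻¹' ball x (r x))},
    ?_, ?_, ?_⟩
  · intro ν hν x' hx'
    obtain ⟨x, hxF, hx'ball⟩ := mem_iUnion₂.mp (hFcov hx')
    have hxE : x ∈ E := hFE hxF
    have hν' := (mem_iInter₂.mp hν) x hxF
    refine ⟨r x + θ x, by have := hr0 x hxE; have := hθ0 x hxE; positivity, ?_, ?_⟩
    · have := hrc x hxE; have := hθ0 x hxE; linarith
    · have hsub : ball x (r x) ⊆ ball x' (r x + θ x) := by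
        intro w hw
        rw [mem_ball] at hw hx'ball ⊢
        have : dist w x' ≤ dist w x + dist x x' := dist_triangle w x x'
        rw [dist_comm x x'] at this
        linarith
      refine lt_of_lt_of_le (lt_of_le_of_lt ?_ hν') (measure_mono (preimage_mono hsub))
      apply ENNReal.ofReal_le_ofReal
      apply Real.rpow_le_rpow (by have := hr0 x hxE; have := hθ0 x hxE; positivity)
        (by have := hθ0 x hxE; linarith) hβ.le
  · exact hFfin.isOpen_biInter (fun x _ => isOpen_measure_gt isOpen_ball _)
  · exact mem_iInter₂.mpr (fun x hxF => hrlt x (hFE hxF))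

lemma exists_cover {E : Set (EuclideanSpace ℝ (Fin d))} (hE : IsCompact E) (hne : E.Nonempty)
    {α : ℝ} (hα : 0 < α) (hfin : μH[α] E < ⊤) {δ : ℝ} (hδ : 0 < δ) :
    ∃ (s : Finset ℕ) (z : ℕ → EuclideanSpace ℝ (Fin d)) (ρ : ℕ → ℝ),
      (∀ n, z n ∈ E) ∧ (∀ n ∈ s, 0 < ρ n ∧ ρ n < δ) ∧
      (E ⊆ ⋃ n ∈ s, ball (z n) (ρ n)) ∧
      (∑ n ∈ s, ENNReal.ofReal (ρ n ^ α) ≤ μH[α] E + 2) := by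
  classical
  set r0 : ℝ≥0∞ := ENNReal.ofReal (δ/2) with hr0
  have hr0pos : 0 < r0 := by
    rw [hr0]; exact ENNReal.ofReal_pos.mpr (by linarith)
  have key : (⨅ (t : ℕ → Set (EuclideanSpace ℝ (Fin d))) (_ : E ⊆ ⋃ n, t n)
      (_ : ∀ n, EMetric.diam (t n) ≤ r0),
      ∑' n, ⨆ _ : (t n).Nonempty, EMetric.diam (t n) ^ α) ≤ μH[α] E := by
    rw [Measure.hausdorffMeasure_apply]
    exact le_iSup₂ (f := fun (r : ℝ≥0∞) (_ : 0 < r) =>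
      ⨅ (t : ℕ → Set (EuclideanSpace ℝ (Fin d))) (_ : E ⊆ ⋃ n, t n)
        (_ : ∀ n, EMetric.diam (t n) ≤ r),
        ∑' n, ⨆ _ : (t n).Nonempty, EMetric.diam (t n) ^ α) r0 hr0pos
  have keylt : (⨅ (t : ℕ → Set (EuclideanSpace ℝ (Fin d))) (_ : E ⊆ ⋃ n, t n)
      (_ : ∀ n, EMetric.diam (t n) ≤ r0),
      ∑' n, ⨆ _ : (t n).Nonempty, EMetric.diam (t n) ^ α) < μH[α] E + 1 :=
    key.trans_lt (ENNReal.lt_add_right hfin.ne one_ne_zero)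
  simp only [iInf_lt_iff] at keylt
  obtain ⟨t, htcov, htdiam, htsum⟩ := keylt
  set t' : ℕ → Set (EuclideanSpace ℝ (Fin d)) := fun n => t n ∩ E with ht'
  have ht'cov : E ⊆ ⋃ n, t' n := by
    intro x hx
    obtain ⟨n, hn⟩ := mem_iUnion.mp (htcov hx)
    exact mem_iUnion.mpr ⟨n, hn, hx⟩
  have ht'diam : ∀ n, EMetric.diam (t' n) ≤ r0 :=
    fun n => (EMetric.diam_mono (inter_subset_left)).trans (htdiam n)
  have ht'ne_top : ∀ n, EMetric.diam (t' n) ≠ ⊤ :=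
    fun n => ((ht'diam n).trans_lt ENNReal.ofReal_lt_top).ne
  set D : ℕ → ℝ := fun n => (EMetric.diam (t' n)).toReal with hD
  have hDnonneg : ∀ n, 0 ≤ D n := fun n => ENNReal.toReal_nonneg
  have hDle : ∀ n, D n ≤ δ/2 := by
    intro n
    rw [hD]
    calc (EMetric.diam (t' n)).toReal ≤ r0.toReal :=
          ENNReal.toReal_mono (by simp [hr0]) (ht'diam n)
      _ = δ/2 := by rw [hr0, ENNReal.toReal_ofReal (by linarith)]
  have hchoice : ∀ n : ℕ, ∃ η : ℝ, 0 < η ∧ η < δ/2 ∧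
      (D n + η) ^ α ≤ D n ^ α + (2⁻¹ : ℝ) ^ (n+1) := by
    intro n
    have hcont0 : ContinuousAt (fun η : ℝ => (D n + η) ^ α) 0 :=
      ContinuousAt.rpow_const (by fun_prop) (Or.inr hα.le)
    have hval : ((fun η : ℝ => (D n + η) ^ α) 0) = D n ^ α := by norm_num
    have hcont : Tendsto (fun η : ℝ => (D n + η) ^ α) (𝓝[>] (0:ℝ)) (𝓝 (D n ^ α)) := by
      rw [← hval]
      exact hcont0.tendsto.mono_left nhdsWithin_le_nhds
    have h2 : ∀ᶠ η in 𝓝[>] (0:ℝ), (D n + η) ^ α < D n ^ α + (2⁻¹:ℝ)^(n+1) :=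
      hcont.eventually_lt_const (lt_add_of_pos_right _ (by positivity))
    have h3 : ∀ᶠ η in 𝓝[>] (0:ℝ), η < δ/2 :=
      (tendsto_id.mono_right nhdsWithin_le_nhds).eventually_lt_const (by linarith)
    have h4 : ∀ᶠ η in 𝓝[>] (0:ℝ), (0:ℝ) < η := eventually_mem_nhdsWithin
    obtain ⟨η, ⟨hpos, hlt⟩, hineq⟩ := ((h4.and h3).and h2).exists
    exact ⟨η, hpos, hlt, hineq.le⟩
  choose η hη1 hη2 hη3 using hchoice
  set ρ : ℕ → ℝ := fun n => D n + η n with hρ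
  set z : ℕ → EuclideanSpace ℝ (Fin d) := fun n =>
    if h : (t' n).Nonempty then h.choose else hne.choose with hz
  have hzE : ∀ n, z n ∈ E := by
    intro n
    simp only [hz]
    split_ifs with h
    · exact h.choose_spec.2
    · exact hne.choose_spec
  have hsub : ∀ n, (t' n).Nonempty → t' n ⊆ ball (z n) (ρ n) := by
    intro n h w hw
    have hzmem : z n ∈ t' n := by simp only [hz]; rw [dif_pos h]; exact h.choose_spec
    have hedist : edist w (z n) ≤ EMetric.diam (t' n) := EMetric.edist_le_diam_of_mem hw hzmem
    have : dist w (z n) ≤ D n := by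
      rw [dist_edist, hD]
      exact ENNReal.toReal_mono (ht'ne_top n) hedist
    exact mem_ball.mpr (lt_of_le_of_lt this (by simp only [hρ]; linarith [hη1 n]))
  set g : ℕ → Set (EuclideanSpace ℝ (Fin d)) := fun n =>
    if (t' n).Nonempty then ball (z n) (ρ n) else ∅ with hg
  have hgopen : ∀ n, IsOpen (g n) := by
    intro n; simp only [hg]; split_ifs <;> [exact isOpen_ball; exact isOpen_empty]
  have hgcov : E ⊆ ⋃ n, g n := by
    intro x hx
    obtain ⟨n, hn⟩ := mem_iUnion.mp (ht'cov hx)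
    refine mem_iUnion.mpr ⟨n, ?_⟩
    have hne' : (t' n).Nonempty := ⟨x, hn⟩
    simp only [hg, if_pos hne']
    exact hsub n hne' hn
  obtain ⟨s0, hs0⟩ := hE.elim_finite_subcover g hgopen hgcov
  set s : Finset ℕ := s0.filter (fun n => (t' n).Nonempty) with hs
  refine ⟨s, z, ρ, hzE, ?_, ?_, ?_⟩
  · intro n hn
    have h1 := hη1 n; have h2 := hη2 n; have h3 := hDnonneg n; have h4 := hDle n
    constructor <;> (simp only [hρ]; linarith)
  · intro x hx
    obtain ⟨n, hn⟩ := mem_iUnion.mp (hs0 hx)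
    simp only [mem_iUnion, exists_prop] at hn ⊢
    obtain ⟨hns0, hxg⟩ := hn
    have hne' : (t' n).Nonempty := by
      by_contra h
      simp only [hg, if_neg h] at hxg; exact hxg
    refine ⟨n, Finset.mem_filter.mpr ⟨hns0, hne'⟩, ?_⟩
    simpa only [hg, if_pos hne'] using hxg
  · have hterm : ∀ n ∈ s, ENNReal.ofReal (ρ n ^ α) ≤
        (⨆ _ : (t n).Nonempty, EMetric.diam (t n) ^ α) + (2⁻¹ : ℝ≥0∞) ^ (n+1) := by
      intro n hn
      have hne' : (t' n).Nonempty := (Finset.mem_filter.mp hn).2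
      have htne : (t n).Nonempty := hne'.mono inter_subset_left
      rw [iSup_pos htne]
      have h1 : ENNReal.ofReal (ρ n ^ α) ≤ ENNReal.ofReal (D n ^ α + (2⁻¹:ℝ)^(n+1)) :=
        ENNReal.ofReal_le_ofReal (hη3 n)
      refine h1.trans ?_
      rw [ENNReal.ofReal_add (by positivity) (by positivity)]
      have h2 : ENNReal.ofReal (D n ^ α) ≤ EMetric.diam (t n) ^ α := by
        have : ENNReal.ofReal (D n ^ α) = EMetric.diam (t' n) ^ α := by
          simp only [hD]
          rw [ENNReal.toReal_rpow, ENNReal.ofReal_toReal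
            (ENNReal.rpow_ne_top_of_nonneg hα.le (ht'ne_top n))]
        rw [this]
        exact ENNReal.rpow_le_rpow (EMetric.diam_mono inter_subset_left) hα.le
      have h3 : ENNReal.ofReal ((2⁻¹:ℝ)^(n+1)) = (2⁻¹ : ℝ≥0∞) ^ (n+1) := by
        rw [ENNReal.ofReal_pow (by norm_num)]
        congr 1
        rw [ENNReal.ofReal_inv_of_pos (by norm_num)]
        norm_num
      exact add_le_add h2 (le_of_eq h3)
    calc ∑ n ∈ s, ENNReal.ofReal (ρ n ^ α)
        ≤ ∑ n ∈ s, ((⨆ _ : (t n).Nonempty, EMetric.diam (t n) ^ α) + (2⁻¹ : ℝ≥0∞) ^ (n+1)) :=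
          Finset.sum_le_sum hterm
      _ = (∑ n ∈ s, ⨆ _ : (t n).Nonempty, EMetric.diam (t n) ^ α)
          + ∑ n ∈ s, (2⁻¹ : ℝ≥0∞) ^ (n+1) := Finset.sum_add_distrib
      _ ≤ (∑' n, ⨆ _ : (t n).Nonempty, EMetric.diam (t n) ^ α)
          + ∑' n, (2⁻¹ : ℝ≥0∞) ^ (n+1) :=
          add_le_add (ENNReal.sum_le_tsum s) (ENNReal.sum_le_tsum s)
      _ ≤ (μH[α] E + 1) + 1 := by
          refine add_le_add htsum.le ?_
          have : ∑' n : ℕ, (2⁻¹ : ℝ≥0∞) ^ (n+1) = 2⁻¹ * ∑' n : ℕ, (2⁻¹ : ℝ≥0∞) ^ n := by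
            rw [← ENNReal.tsum_mul_left]
            congr 1; ext n; rw [pow_succ, mul_comm]
          rw [this, ENNReal.tsum_geometric]
          norm_num
      _ = μH[α] E + 2 := by rw [add_assoc]; norm_num

end Aux

theorem exists_denseGδ_lowerLocalDim_le
    {d : ℕ} (K : Set (EuclideanSpace ℝ (Fin d))) (hK : IsCompact K) (hinf : K.Infinite)
    (E : Set (EuclideanSpace ℝ (Fin d))) (hEK : E ⊆ K) (hE : IsCompact E)
    (α : ℝ) (hα : 0 < α) (hfin : μH[α] E < ⊤) :
    ∃ R : Set (ProbabilityMeasure K), Dense R ∧ IsGδ R ∧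
      ∀ μ ∈ R, ∀ x ∈ E, lowerLocalDim (measOn μ) x ≤ (α : EReal) := by
  classical
  rcases E.eq_empty_or_nonempty with hE0 | hne
  · refine ⟨univ, dense_univ, IsGδ.univ, ?_⟩
    intro μ _ x hx
    rw [hE0] at hx
    exact absurd hx (notMem_empty x)
  -- constants
  set C : ℝ≥0∞ := μH[α] E + 2 with hC
  have hCne : C ≠ ⊤ := by
    rw [hC]; exact ENNReal.add_ne_top.mpr ⟨hfin.ne, by norm_num⟩
  set Cr : ℝ := C.toReal with hCrdef
  have hCr2 : 2 ≤ Cr := by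
    rw [hCrdef, hC]
    calc (2:ℝ) = ((2:ℝ≥0∞)).toReal := by norm_num
      _ ≤ (μH[α] E + 2).toReal := ENNReal.toReal_mono (hC ▸ hCne) le_add_self
  have hCr0 : 0 < Cr := by linarith
  have hCofReal : C = ENNReal.ofReal Cr := (ENNReal.ofReal_toReal hCne).symm
  set b : ℕ → ℝ := fun j => (2⁻¹:ℝ)^(2*j+1) / (Cr * (2:ℝ)^(α+1)) with hbdef
  have hb : ∀ j, 0 < b j := by
    intro j; simp only [hbdef]; positivity
  set δ : ℕ → ℝ := fun j => min (1/((j:ℝ)+1)) (b j ^ ((j:ℝ)+1)) with hδdef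
  have hδpos : ∀ j, 0 < δ j := fun j => lt_min (by positivity) (Real.rpow_pos_of_pos (hb j) _)
  have hδle1 : ∀ j, δ j ≤ 1/((j:ℝ)+1) := fun j => min_le_left _ _
  have hδleb : ∀ j, δ j ≤ b j ^ ((j:ℝ)+1) := fun j => min_le_right _ _
  -- covers at each scale
  have hcov : ∀ j : ℕ, ∃ (s : Finset ℕ) (z : ℕ → EuclideanSpace ℝ (Fin d)) (ρ : ℕ → ℝ),
      (∀ n, z n ∈ E) ∧ (∀ n ∈ s, 0 < ρ n ∧ ρ n < δ j) ∧
      (E ⊆ ⋃ n ∈ s, ball (z n) (ρ n)) ∧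
      (∑ n ∈ s, ENNReal.ofReal (ρ n ^ α) ≤ μH[α] E + 2) :=
    fun j => exists_cover hE hne hα hfin (hδpos j)
  choose s z ρ hzE hρ hcovs hsum using hcov
  set y : ℕ → ℕ → ↥K := fun j n => ⟨z j n, hEK (hzE j n)⟩ with hy
  set S : ℕ → ℝ≥0∞ := fun j => ∑ n ∈ s j, ENNReal.ofReal (ρ j n ^ α) with hSdef
  have hSleC : ∀ j, S j ≤ C := hsum
  have hSne : ∀ j, S j ≠ ⊤ := fun j => ((hSleC j).trans_lt (lt_top_iff_ne_top.mpr hCne)).ne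
  have hSpos : ∀ j, 0 < S j := by
    intro j
    obtain ⟨x0, hx0⟩ := hne
    obtain ⟨i, hi, hxi⟩ := mem_iUnion₂.mp (hcovs j hx0)
    have h1 : (0:ℝ≥0∞) < ENNReal.ofReal (ρ j i ^ α) :=
      ENNReal.ofReal_pos.mpr (Real.rpow_pos_of_pos (hρ j i hi).1 α)
    have h2 : ENNReal.ofReal (ρ j i ^ α) ≤ S j := by
      simp only [hSdef]
      exact Finset.single_le_sum (f := fun n => ENNReal.ofReal (ρ j n ^ α))
        (fun n _ => zero_le) hi
    exact h1.trans_le h2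
  set w : ℕ → ℕ → ℝ≥0∞ := fun j n => ENNReal.ofReal (ρ j n ^ α) / S j with hwdef
  set mj : ℕ → Measure ↥K := fun j => ∑ n ∈ s j, (w j n) • Measure.dirac (y j n) with hmjdef
  set m : Measure ↥K := Measure.sum (fun j => ((2⁻¹:ℝ≥0∞)^(j+1)) • mj j) with hmdef
  have hmj_univ : ∀ j, mj j univ = 1 := by
    intro j
    simp only [hmjdef]
    rw [Measure.finset_sum_apply]
    simp only [Measure.smul_apply, measure_univ, smul_eq_mul, mul_one]
    simp only [hwdef, div_eq_mul_inv, ← Finset.sum_mul]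
    exact ENNReal.mul_inv_cancel (hSpos j).ne' (hSne j)
  have hm_univ : m univ = 1 := by
    rw [hmdef, Measure.sum_apply _ MeasurableSet.univ]
    simp only [Measure.smul_apply, smul_eq_mul, hmj_univ, mul_one]
    have h1 : ∑' j:ℕ, (2⁻¹:ℝ≥0∞)^(j+1) = (2⁻¹) * ∑' j:ℕ, (2⁻¹:ℝ≥0∞)^j := by
      rw [← ENNReal.tsum_mul_left]
      congr 1; funext j; rw [pow_succ, mul_comm]
    rw [h1, ENNReal.tsum_geometric]
    rw [ENNReal.one_sub_inv_two, inv_inv]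
    exact ENNReal.inv_mul_cancel (by norm_num) (by norm_num)
  haveI hmprob : IsProbabilityMeasure m := ⟨hm_univ⟩
  have hmlb : ∀ j, ∀ i ∈ s j, ∀ A : Set ↥K, MeasurableSet A → y j i ∈ A →
      (2⁻¹:ℝ≥0∞)^(j+1) * w j i ≤ m A := by
    intro j i hi A hA hyA
    rw [hmdef, Measure.sum_apply _ hA]
    refine le_trans ?_ (ENNReal.le_tsum j)
    rw [Measure.smul_apply, smul_eq_mul]
    apply mul_le_mul_right
    simp only [hmjdef]
    rw [Measure.finset_sum_apply]
    refine le_trans ?_ (Finset.single_le_sum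
      (f := fun n => (w j n • Measure.dirac (y j n)) A) (fun n _ => zero_le) hi)
    show w j i ≤ (w j i • Measure.dirac (y j i)) A
    rw [Measure.smul_apply, smul_eq_mul, Measure.dirac_apply' _ hA, indicator_of_mem hyA]
    simp
  -- the open sets
  set U : ℕ → Set (ProbabilityMeasure ↥K) := fun n =>
    {μ : ProbabilityMeasure ↥K | ∀ x ∈ E, ∃ r : ℝ, 0 < r ∧ r < 1/((n:ℝ)+1) ∧
      ENNReal.ofReal (r ^ (α + 1/((n:ℝ)+1))) < (μ : Measure ↥K) (Subtype.val ⁻¹' ball x r)}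
    with hUdef
  have hUopen : ∀ n, IsOpen (U n) := fun n => isOpen_U_s14 hE (by positivity) _
  -- key: any measure dominating c • m is in all the U n
  have hkey : ∀ (c : ℝ), 0 < c → ∀ (ν : ProbabilityMeasure ↥K),
      (∀ A : Set ↥K, MeasurableSet A → ENNReal.ofReal c * m A ≤ (ν : Measure ↥K) A) →
      ∀ n, ν ∈ U n := by
    intro c hc0 ν hν n
    intro x hx
    obtain ⟨j0, hj0⟩ := exists_pow_lt_of_lt_one hc0 (by norm_num : (2⁻¹:ℝ) < 1)
    set j := max (2*n+2) j0 with hjdef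
    have hj1 : 2*n+2 ≤ j := le_max_left _ _
    have hj2 : (2⁻¹:ℝ)^j ≤ c :=
      le_trans (pow_le_pow_of_le_one (by norm_num) (by norm_num) (le_max_right _ _)) hj0.le
    obtain ⟨i, hi, hxi⟩ := mem_iUnion₂.mp (hcovs j hx)
    obtain ⟨hρ0, hρδ⟩ := hρ j i hi
    set p : ℝ := ρ j i with hpdef
    have hδj1 : δ j ≤ 1/((j:ℝ)+1) := hδle1 j
    have hδj1' : δ j ≤ 1 := hδj1.trans (by
      rw [div_le_one (by positivity)]; linarith [Nat.cast_nonneg (α := ℝ) j])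
    have hp1 : p < 1 := lt_of_lt_of_le hρδ hδj1'
    refine ⟨2 * p, by positivity, ?_, ?_⟩
    · have h2j : (2:ℝ)/((j:ℝ)+1) ≤ 1/((n:ℝ)+1) := by
        rw [div_le_div_iff₀ (by positivity) (by positivity)]
        have : (2*n+2 : ℝ) ≤ (j:ℝ) := by exact_mod_cast hj1
        nlinarith
      calc 2 * p < 2 * δ j := by linarith
        _ ≤ 2 * (1/((j:ℝ)+1)) := by linarith
        _ = 2/((j:ℝ)+1) := by ring
        _ ≤ 1/((n:ℝ)+1) := h2j
    · -- measure bound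
      have hmem : y j i ∈ (Subtype.val ⁻¹' ball x (2 * p) : Set ↥K) := by
        simp only [mem_preimage, hy]
        rw [mem_ball]
        rw [mem_ball] at hxi
        rw [dist_comm]
        calc dist x (z j i) < p := hxi
          _ ≤ 2 * p := by linarith
      have hball : MeasurableSet (Subtype.val ⁻¹' ball x (2*p) : Set ↥K) :=
        measurable_subtype_coe measurableSet_ball
      have h1 : ENNReal.ofReal c * ((2⁻¹:ℝ≥0∞)^(j+1) * w j i)
          ≤ (ν : Measure ↥K) (Subtype.val ⁻¹' ball x (2*p)) :=
        le_trans (mul_le_mul_right (hmlb j i hi _ hball hmem) _) (hν _ hball)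
      refine lt_of_lt_of_le ?_ h1
      -- numeric inequality
      have hfrac : p ^ (1/((n:ℝ)+1)) < b j := by
        have h1' : p ^ (1/((n:ℝ)+1)) ≤ p ^ (1/((j:ℝ)+1)) := by
          apply Real.rpow_le_rpow_of_exponent_ge hρ0 hp1.le
          apply div_le_div_of_nonneg_left (by norm_num) (by positivity)
          have : (n:ℝ) ≤ (j:ℝ) := by
            exact_mod_cast le_trans (by omega : n ≤ 2*n+2) hj1
          linarith
        have h2' : p ^ (1/((j:ℝ)+1)) < (δ j) ^ (1/((j:ℝ)+1)) :=
          Real.rpow_lt_rpow hρ0.le hρδ (by positivity)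
        have h3' : (δ j) ^ (1/((j:ℝ)+1)) ≤ b j := by
          calc (δ j) ^ (1/((j:ℝ)+1)) ≤ (b j ^ ((j:ℝ)+1)) ^ (1/((j:ℝ)+1)) :=
                Real.rpow_le_rpow (hδpos j).le (hδleb j) (by positivity)
            _ = b j := by
                rw [← Real.rpow_mul (hb j).le, mul_one_div,
                  div_self (by positivity : ((j:ℝ)+1) ≠ 0), Real.rpow_one]
        linarith
      -- rewrite RHS as ofReal of a real number
      have e1 : (2⁻¹:ℝ≥0∞)^(j+1) = ENNReal.ofReal ((2⁻¹:ℝ)^(j+1)) := by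
        rw [ENNReal.ofReal_pow (by norm_num)]
        congr 1
        rw [ENNReal.ofReal_inv_of_pos (by norm_num)]
        norm_num
      have e2 : ENNReal.ofReal (p ^ α) / S j ≥ ENNReal.ofReal (p ^ α / Cr) := by
        rw [ENNReal.ofReal_div_of_pos hCr0, ← hCofReal]
        exact ENNReal.div_le_div_left (hSleC j) _
      have e3 : ENNReal.ofReal c * ((2⁻¹:ℝ≥0∞)^(j+1) * w j i)
          ≥ ENNReal.ofReal (c * ((2⁻¹:ℝ)^(j+1) * (p ^ α / Cr))) := by
        rw [ENNReal.ofReal_mul hc0.le, ENNReal.ofReal_mul (by positivity)]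
        apply mul_le_mul_right
        rw [e1]
        apply mul_le_mul_right
        exact e2
      refine lt_of_lt_of_le ?_ e3
      rw [ENNReal.ofReal_lt_ofReal_iff (by positivity)]
      -- the real inequality
      have hA2 : (2:ℝ)^(α + 1/((n:ℝ)+1)) ≤ (2:ℝ)^(α+1) := by
        apply Real.rpow_le_rpow_of_exponent_le one_le_two
        have : 1/((n:ℝ)+1) ≤ 1 := by
          rw [div_le_one (by positivity)]; linarith [Nat.cast_nonneg (α := ℝ) n]
        linarith
      have hs2 : (2:ℝ)^(α + 1/((n:ℝ)+1)) * (2⁻¹:ℝ)^j / (2:ℝ)^(α+1) ≤ c := by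
        calc (2:ℝ)^(α + 1/((n:ℝ)+1)) * (2⁻¹:ℝ)^j / (2:ℝ)^(α+1)
            ≤ (2:ℝ)^(α+1) * (2⁻¹:ℝ)^j / (2:ℝ)^(α+1) := by gcongr
          _ = (2⁻¹:ℝ)^j := by
              field_simp
              all_goals ring
          _ ≤ c := hj2
      have hsplit : (2⁻¹:ℝ)^(2*j+1) = (2⁻¹:ℝ)^(j+1) * (2⁻¹:ℝ)^j := by
        rw [← pow_add]
        congr 1
        omega
      have hexpand : (2*p) ^ (α + 1/((n:ℝ)+1))
          = (2:ℝ)^(α + 1/((n:ℝ)+1)) * (p^α * p^(1/((n:ℝ)+1))) := by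
        rw [Real.mul_rpow (by norm_num) hρ0.le, Real.rpow_add hρ0]
      rw [hexpand]
      calc (2:ℝ)^(α + 1/((n:ℝ)+1)) * (p^α * p^(1/((n:ℝ)+1)))
          < (2:ℝ)^(α + 1/((n:ℝ)+1)) * (p^α * b j) := by
            apply mul_lt_mul_of_pos_left _ (Real.rpow_pos_of_pos (by norm_num) _)
            exact mul_lt_mul_of_pos_left hfrac (Real.rpow_pos_of_pos hρ0 _)
        _ ≤ c * ((2⁻¹:ℝ)^(j+1) * (p ^ α / Cr)) := by
            have heq : (2:ℝ)^(α + 1/((n:ℝ)+1)) * (p^α * b j)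
                = ((2:ℝ)^(α + 1/((n:ℝ)+1)) * (2⁻¹:ℝ)^j / (2:ℝ)^(α+1))
                  * ((2⁻¹:ℝ)^(j+1) * (p ^ α / Cr)) := by
              simp only [hbdef, hsplit]
              field_simp
              all_goals ring
            rw [heq]
            apply mul_le_mul_of_nonneg_right hs2
            positivity
  -- density
  have hdense : Dense (⋂ n, U n) := by
    intro μ0
    set c : ℕ → ℝ := fun k => 1/((k:ℝ)+1) with hcdef
    have hc0 : ∀ k, 0 < c k := fun k => by positivity
    have hc1 : ∀ k, ENNReal.ofReal (c k) ≤ 1 := by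
      intro k
      rw [ENNReal.ofReal_le_one, hcdef]
      rw [div_le_one (by positivity)]
      linarith [Nat.cast_nonneg (α := ℝ) k]
    set νm : ℕ → Measure ↥K := fun k =>
      ENNReal.ofReal (c k) • m + (1 - ENNReal.ofReal (c k)) • (μ0 : Measure ↥K) with hνmdef
    have hνuniv : ∀ k, νm k univ = 1 := by
      intro k
      simp only [hνmdef, Measure.add_apply, Measure.smul_apply, smul_eq_mul, measure_univ,
        mul_one]
      exact add_tsub_cancel_of_le (hc1 k)
    have hinstν : ∀ k, IsProbabilityMeasure (νm k) := fun k => ⟨hνuniv k⟩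
    set ν : ℕ → ProbabilityMeasure ↥K := fun k => ⟨νm k, hinstν k⟩ with hνdef
    have hνmem : ∀ k, ν k ∈ ⋂ n, U n := by
      intro k
      refine mem_iInter.mpr (fun n => hkey (c k) (hc0 k) (ν k) ?_ n)
      intro A hA
      show ENNReal.ofReal (c k) * m A ≤ νm k A
      simp only [hνmdef, Measure.add_apply, Measure.smul_apply, smul_eq_mul]
      exact le_add_right le_rfl
    have htend : Tendsto ν atTop (𝓝 μ0) := by
      rw [ProbabilityMeasure.tendsto_iff_forall_lintegral_tendsto]
      intro f
      have hlint : ∀ k, ∫⁻ ω, f ω ∂(ν k : Measure ↥K)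
          = ENNReal.ofReal (c k) * ∫⁻ ω, f ω ∂m
            + (1 - ENNReal.ofReal (c k)) * ∫⁻ ω, f ω ∂(μ0 : Measure ↥K) := by
        intro k
        show ∫⁻ ω, f ω ∂(νm k) = _
        simp only [hνmdef]
        rw [lintegral_add_measure, lintegral_smul_measure, lintegral_smul_measure]
        simp only [smul_eq_mul]
      have hM : ∫⁻ ω, f ω ∂m ≠ ⊤ :=
        (BoundedContinuousFunction.lintegral_lt_top_of_nnreal m f).ne
      have hc0' : Tendsto (fun k => ENNReal.ofReal (c k)) atTop (𝓝 0) := by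
        rw [show (0:ℝ≥0∞) = ENNReal.ofReal 0 by simp]
        exact ENNReal.tendsto_ofReal tendsto_one_div_add_atTop_nhds_zero_nat
      have t1 : Tendsto (fun k => ENNReal.ofReal (c k) * ∫⁻ ω, f ω ∂m) atTop (𝓝 0) := by
        have := ENNReal.Tendsto.mul_const hc0' (Or.inr hM)
        rwa [zero_mul] at this
      have t2 : Tendsto (fun k => (1 - ENNReal.ofReal (c k)) * ∫⁻ ω, f ω ∂(μ0 : Measure ↥K))
          atTop (𝓝 (∫⁻ ω, f ω ∂(μ0 : Measure ↥K))) := by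
        have ht : Tendsto (fun k => 1 - ENNReal.ofReal (c k)) atTop (𝓝 1) := by
          have := ENNReal.Tendsto.sub (tendsto_const_nhds (x := (1:ℝ≥0∞))) hc0'
            (Or.inl (by norm_num))
          rwa [tsub_zero] at this
        have := ENNReal.Tendsto.mul_const (b := ∫⁻ ω, f ω ∂(μ0 : Measure ↥K)) ht
          (Or.inl one_ne_zero)
        rwa [one_mul] at this
      have := t1.add t2
      rw [zero_add] at this
      simp only [hlint]
      exact this
    exact mem_closure_of_tendsto htend (Filter.Eventually.of_forall hνmem)
  -- conclusion
  refine ⟨⋂ n, U n, hdense, IsGδ.iInter (fun n => (hUopen n).isGδ), ?_⟩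
  intro μ hμR x hx
  apply aux_EReal_le
  intro δ' hδ'
  show Filter.liminf (fun r : ℝ => ENNReal.log (measOn μ (Metric.ball x r))
      / (Real.log r : EReal)) (𝓝[>] 0) ≤ _
  refine Filter.liminf_le_of_frequently_le ?_ (by isBoundedDefault)
  rw [Filter.frequently_iff]
  intro Uset hUset
  obtain ⟨u, hu, hIoo⟩ := mem_nhdsGT_iff_exists_Ioo_subset.mp hUset
  have humem : (0:ℝ) < u := hu
  obtain ⟨n, hn⟩ := exists_nat_one_div_lt (show (0:ℝ) < min (min u 1) δ' by
    apply lt_min (lt_min humem one_pos) hδ')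
  obtain ⟨r, hr0, hru, hrlt⟩ := (mem_iInter.mp hμR n) x hx
  have hrsmall : r < min (min u 1) δ' := hru.trans hn
  have hr1 : r < 1 := lt_of_lt_of_le hrsmall (le_trans (min_le_left _ _) (min_le_right _ _))
  refine ⟨r, hIoo ⟨hr0, lt_of_lt_of_le hrsmall
    (le_trans (min_le_left _ _) (min_le_left _ _))⟩, ?_⟩
  have hβδ : α + 1/((n:ℝ)+1) ≤ α + δ' := by
    have : 1/((n:ℝ)+1) ≤ δ' := le_trans hn.le (min_le_right _ _)
    linarith
  have hA_eq : measOn μ (Metric.ball x r) = (μ : Measure ↥K) (Subtype.val ⁻¹' ball x r) :=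
    Measure.map_apply measurable_subtype_coe measurableSet_ball
  have hlow : ENNReal.ofReal (r ^ (α + 1/((n:ℝ)+1))) < measOn μ (Metric.ball x r) := by
    rw [hA_eq]; exact hrlt
  have hA1 : measOn μ (Metric.ball x r) ≤ 1 := by
    rw [hA_eq]; exact prob_le_one
  have hlogr_neg : Real.log r < 0 := Real.log_neg hr0 hr1
  have hlogA_ge : (((α + 1/((n:ℝ)+1)) * Real.log r : ℝ) : EReal)
      ≤ ENNReal.log (measOn μ (Metric.ball x r)) := by
    have h := ENNReal.log_monotone hlow.le
    rwa [ENNReal.log_ofReal_of_pos (by positivity), Real.log_rpow hr0] at h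
  have hlogA_le : ENNReal.log (measOn μ (Metric.ball x r)) ≤ 0 :=
    ENNReal.log_le_zero_iff.mpr hA1
  have hne_top : ENNReal.log (measOn μ (Metric.ball x r)) ≠ ⊤ := by
    intro h
    rw [h] at hlogA_le
    exact absurd hlogA_le (by simp)
  have hne_bot : ENNReal.log (measOn μ (Metric.ball x r)) ≠ ⊥ := by
    intro h
    rw [h, le_bot_iff] at hlogA_ge
    exact EReal.coe_ne_bot _ hlogA_ge
  set a : ℝ := (ENNReal.log (measOn μ (Metric.ball x r))).toReal with hadef
  have ha : (a : EReal) = ENNReal.log (measOn μ (Metric.ball x r)) :=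
    EReal.coe_toReal hne_top hne_bot
  have h1 : (α + 1/((n:ℝ)+1)) * Real.log r ≤ a := by
    rw [← ha] at hlogA_ge
    exact_mod_cast hlogA_ge
  show ENNReal.log (measOn μ (Metric.ball x r)) / (Real.log r : EReal) ≤ ((α + δ' : ℝ) : EReal)
  rw [← ha, ← EReal.coe_div, EReal.coe_le_coe_iff, div_le_iff_of_neg hlogr_neg]
  have h2 : (α + δ') * Real.log r ≤ (α + 1/((n:ℝ)+1)) * Real.log r :=
    mul_le_mul_of_nonpos_right hβδ hlogr_neg.le
  linarith
end

section
/- Let K be a nonempty compact subset of ℝ^d, let s > 0 and let m > l ≥ 1 be integers. Then the set U_{l,m} = {μ ∈ P(K) : for every x ∈ K there exists r ∈ (1/m, 1/l) such that μ(B(x,r)) < r^s} is open in P(K). -/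
open MeasureTheory Filter Metric Set Topology BoundedContinuousFunction
open scoped ENNReal NNReal

lemma isOpen_lintegral_lt {Ω : Type*} [MeasurableSpace Ω] [TopologicalSpace Ω]
    [OpensMeasurableSpace Ω] (g : Ω →ᵇ ℝ≥0) (c : ℝ≥0∞) :
    IsOpen {ν : ProbabilityMeasure Ω | ∫⁻ ω, (g ω : ℝ≥0∞) ∂(ν : Measure Ω) < c} := by
  have heq : ∀ ν : ProbabilityMeasure Ω, ∫⁻ ω, (g ω : ℝ≥0∞) ∂(ν : Measure Ω)
      = ((ν.toFiniteMeasure.testAgainstNN g : ℝ≥0) : ℝ≥0∞) := fun ν =>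
    (FiniteMeasure.testAgainstNN_coe_eq (μ := ν.toFiniteMeasure) (f := g)).symm
  simp only [heq]
  exact isOpen_Iio.preimage
    (ENNReal.continuous_coe.comp (ProbabilityMeasure.continuous_testAgainstNN_eval g))

theorem isOpen_U
    {d : ℕ} (K : Set (EuclideanSpace ℝ (Fin d))) (hK : IsCompact K) (hne : K.Nonempty)
    (s : ℝ) (hs : 0 < s) (l m : ℕ) (hl : 1 ≤ l) (hlm : l < m) :
    IsOpen {μ : ProbabilityMeasure K |
      ∀ x ∈ K, ∃ r : ℝ, 1 / (m : ℝ) < r ∧ r < 1 / (l : ℝ) ∧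
        measOn μ (Metric.ball x r) < ENNReal.ofReal (r ^ s)} := by
  have hm0 : (0:ℝ) < 1 / (m:ℝ) := by
    have : 0 < m := by omega
    positivity
  rw [isOpen_iff_forall_mem_open]
  intro μ hμ
  have key : ∀ x ∈ K, ∃ (ρ ε' : ℝ) (g : K →ᵇ ℝ≥0), 0 < ε' ∧ 1 / (m:ℝ) < ρ ∧ ρ < 1 / (l:ℝ) ∧
      (∫⁻ ω, (g ω : ℝ≥0∞) ∂(μ : Measure K)) < ENNReal.ofReal (ρ ^ s) ∧
      ∀ ν : ProbabilityMeasure K,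
        (∫⁻ ω, (g ω : ℝ≥0∞) ∂(ν : Measure K)) < ENNReal.ofReal (ρ ^ s) →
        ∀ y, dist y x < ε' → measOn ν (Metric.ball y ρ) < ENNReal.ofReal (ρ ^ s) := by
    intro x hx
    obtain ⟨r, hr1, hr2, hr3⟩ := hμ x hx
    have hr0 : 0 < r := lt_trans hm0 hr1
    -- choose ε > 0 with 1/m < r - 2ε and measOn μ (ball x r) < ofReal ((r-2ε)^s)
    have htend : Tendsto (fun t : ℝ => ENNReal.ofReal ((r - 2*t) ^ s)) (𝓝 0)
        (𝓝 (ENNReal.ofReal (r ^ s))) := by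
      have h1 : Tendsto (fun t : ℝ => r - 2*t) (𝓝 0) (𝓝 r) := by
        have : Continuous fun t : ℝ => r - 2*t := by continuity
        simpa using this.tendsto 0
      have h2 : ContinuousAt (fun u : ℝ => u ^ s) r :=
        Real.continuousAt_rpow_const r s (Or.inl hr0.ne')
      have h3 : Tendsto (fun u : ℝ => ENNReal.ofReal (u ^ s)) (𝓝 r)
          (𝓝 (ENNReal.ofReal (r ^ s))) :=
        ENNReal.continuous_ofReal.continuousAt.comp h2
      exact h3.comp h1
    have hev1 : ∀ᶠ t in 𝓝 (0:ℝ),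
        measOn μ (Metric.ball x r) < ENNReal.ofReal ((r - 2*t) ^ s) :=
      htend.eventually_const_lt hr3
    have hev2 : ∀ᶠ t in 𝓝 (0:ℝ), 1 / (m:ℝ) < r - 2*t := by
      have h1 : Tendsto (fun t : ℝ => r - 2*t) (𝓝 0) (𝓝 r) := by
        have : Continuous fun t : ℝ => r - 2*t := by continuity
        simpa using this.tendsto 0
      exact h1.eventually_const_lt hr1
    obtain ⟨ε, ⟨hε1, hε2⟩, hεpos⟩ :=
      (((hev1.and hev2).filter_mono nhdsWithin_le_nhds).and
        (eventually_mem_nhdsWithin (s := Ioi (0:ℝ)))).exists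
    rw [mem_Ioi] at hεpos
    set ρ : ℝ := r - 2*ε with hρdef
    have hρpos : 0 < ρ := lt_trans hm0 hε2
    have hδpos : 0 < ε/2 := by linarith
    set E : Set (EuclideanSpace ℝ (Fin d)) := closedBall x (ρ + ε/2) with hEdef
    set g : K →ᵇ ℝ≥0 := (thickenedIndicator hδpos E).compContinuous
      ⟨Subtype.val, continuous_subtype_val⟩ with hgdef
    have hgval : ∀ ω : K, g ω = thickenedIndicator hδpos E ω.val := fun ω => rfl
    have hA : MeasurableSet (Subtype.val ⁻¹' Metric.ball x r : Set K) :=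
      measurableSet_ball.preimage measurable_subtype_coe
    -- thickening (ε/2) E ⊆ ball x r
    have hthick : thickening (ε/2) E ⊆ Metric.ball x r := by
      intro z hz
      rw [Metric.mem_thickening_iff] at hz
      obtain ⟨w, hw, hzw⟩ := hz
      rw [mem_closedBall] at hw
      rw [mem_ball]
      calc dist z x ≤ dist z w + dist w x := dist_triangle _ _ _
        _ < ε/2 + (ρ + ε/2) := by linarith [hzw, hw]
        _ ≤ r := by rw [hρdef]; linarith
    -- upper bound for the integral against μ
    have hgμ : (∫⁻ ω, (g ω : ℝ≥0∞) ∂(μ : Measure K)) < ENNReal.ofReal (ρ ^ s) := by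
      have hb : ∀ ω : K, (g ω : ℝ≥0∞) ≤
          (Subtype.val ⁻¹' Metric.ball x r : Set K).indicator (fun _ => 1) ω := by
        intro ω
        by_cases hω : (ω : EuclideanSpace ℝ (Fin d)) ∈ thickening (ε/2) E
        · have : (ω : K) ∈ (Subtype.val ⁻¹' Metric.ball x r : Set K) := hthick hω
          rw [indicator_of_mem this]
          exact_mod_cast thickenedIndicator_le_one hδpos E ω.val
        · rw [hgval, thickenedIndicator_zero hδpos E hω]
          simp
      calc (∫⁻ ω, (g ω : ℝ≥0∞) ∂(μ : Measure K))
          ≤ ∫⁻ ω, (Subtype.val ⁻¹' Metric.ball x r : Set K).indicator (fun _ => 1) ω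
            ∂(μ : Measure K) := lintegral_mono hb
        _ = (μ : Measure K) (Subtype.val ⁻¹' Metric.ball x r) := lintegral_indicator_one hA
        _ = measOn μ (Metric.ball x r) := by
            rw [measOn, Measure.map_apply measurable_subtype_coe measurableSet_ball]
        _ < ENNReal.ofReal (ρ ^ s) := hε1
    refine ⟨ρ, ε/2, g, hδpos, hε2, by rw [hρdef]; linarith, hgμ, ?_⟩
    intro ν hν y hy
    have hAy : MeasurableSet (Subtype.val ⁻¹' Metric.ball y ρ : Set K) :=
      measurableSet_ball.preimage measurable_subtype_coe
    have hsub : Metric.ball y ρ ⊆ E := by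
      intro z hz
      rw [mem_ball] at hz
      rw [hEdef, mem_closedBall]
      calc dist z x ≤ dist z y + dist y x := dist_triangle _ _ _
        _ ≤ ρ + ε/2 := by linarith
    have hlow : ∀ ω : K,
        (Subtype.val ⁻¹' Metric.ball y ρ : Set K).indicator (fun _ => 1) ω ≤ (g ω : ℝ≥0∞) := by
      intro ω
      by_cases hω : ω ∈ (Subtype.val ⁻¹' Metric.ball y ρ : Set K)
      · rw [indicator_of_mem hω, hgval]
        exact_mod_cast one_le_thickenedIndicator_apply _ hδpos (hsub hω)
      · rw [indicator_of_notMem hω]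
        simp
    calc measOn ν (Metric.ball y ρ)
        = (ν : Measure K) (Subtype.val ⁻¹' Metric.ball y ρ) := by
          rw [measOn, Measure.map_apply measurable_subtype_coe measurableSet_ball]
      _ = ∫⁻ ω, (Subtype.val ⁻¹' Metric.ball y ρ : Set K).indicator (fun _ => 1) ω
          ∂(ν : Measure K) := (lintegral_indicator_one hAy).symm
      _ ≤ ∫⁻ ω, (g ω : ℝ≥0∞) ∂(ν : Measure K) := lintegral_mono hlow
      _ < ENNReal.ofReal (ρ ^ s) := hν
  choose! ρ ε' g hε' hρ1 hρ2 hgμ hgν using key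
  obtain ⟨t, htK, htcov⟩ := hK.elim_nhds_subcover (fun x => Metric.ball x (ε' x))
    (fun x hx => ball_mem_nhds x (hε' x hx))
  refine ⟨⋂ x ∈ t, {ν : ProbabilityMeasure K |
      ∫⁻ ω, (g x ω : ℝ≥0∞) ∂(ν : Measure K) < ENNReal.ofReal (ρ x ^ s)}, ?_, ?_, ?_⟩
  · intro ν hν
    simp only [mem_iInter₂] at hν
    intro y hy
    obtain ⟨x, hxt, hyx⟩ := mem_iUnion₂.mp (htcov hy)
    have hxK := htK x hxt
    exact ⟨ρ x, hρ1 x hxK, hρ2 x hxK,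
      hgν x hxK ν (hν x hxt) y (mem_ball.mp hyx)⟩
  · exact isOpen_biInter_finset fun x _ => isOpen_lintegral_lt (g x) _
  · exact mem_iInter₂.mpr fun x hxt => hgμ x (htK x hxt)
end

section
/- Let K be a nonempty compact subset of ℝ^d and let 0 < s < dim_{B,loc}(K), the local upper box dimension of K. Then for every integer l ≥ 1, the union over integers m > l of the sets U_{l,m} = {μ ∈ P(K) : for every x ∈ K there exists r ∈ (1/m, 1/l) such that μ(B(x,r)) < r^s} is dense in P(K). -/
open MeasureTheory Filter Metric Set Topology
open scoped ENNReal

/-- Minimal number of balls of radius `r` needed to cover `E`. -/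
noncomputable def coverNum {X : Type*} [MetricSpace X] (E : Set X) (r : ℝ) : ℕ∞ :=
  ⨅ (s : Finset X) (_ : E ⊆ ⋃ x ∈ s, Metric.ball x r), (s.card : ℕ∞)

/-- The upper box (Minkowski) dimension of a set:
`limsup_{r → 0⁺} log N(E,r) / log (1/r)`. -/
noncomputable def upperBoxDim {X : Type*} [MetricSpace X] (E : Set X) : EReal :=
  Filter.limsup
    (fun r : ℝ => ((Real.log ((coverNum E r).toNat) / Real.log (1 / r) : ℝ) : EReal))
    (nhdsWithin 0 (Set.Ioi 0))

/-- The local upper box dimension of `K`: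
`inf_{x ∈ K, ρ > 0} upperBoxDim (K ∩ B(x,ρ))`. -/
noncomputable def localUpperBoxDim {X : Type*} [MetricSpace X] (K : Set X) : EReal :=
  ⨅ (x : X) (_ : x ∈ K) (ρ : ℝ) (_ : 0 < ρ), upperBoxDim (K ∩ Metric.ball x ρ)

lemma exists_maximal_sep {X : Type*} [MetricSpace X] {K : Set X} (hK : IsCompact K)
    {E : Set X} (hE : E ⊆ K) {r : ℝ} (hr : 0 < r) :
    ∃ F : Finset X, ↑F ⊆ E ∧ (∀ a ∈ F, ∀ b ∈ F, a ≠ b → r ≤ dist a b) ∧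
      E ⊆ ⋃ x ∈ F, Metric.ball x r := by
  set P : Set (Set X) := {T | T ⊆ E ∧ ∀ a ∈ T, ∀ b ∈ T, a ≠ b → r ≤ dist a b} with hP
  obtain ⟨M, hMP, hMmax⟩ := zorn_subset P (fun c hcP hchain => by
    refine ⟨⋃₀ c, ⟨?_, ?_⟩, fun s hs => subset_sUnion_of_mem hs⟩
    · exact sUnion_subset fun t ht => (hcP ht).1
    · intro a ha b hb hab
      obtain ⟨ta, hta, hat⟩ := ha
      obtain ⟨tb, htb, hbt⟩ := hb
      rcases hchain.total hta htb with h | h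
      · exact (hcP htb).2 a (h hat) b hbt hab
      · exact (hcP hta).2 a hat b (h hbt) hab)
  obtain ⟨hME, hMsep⟩ := hMP
  -- M is finite
  obtain ⟨t, htfin, htcov⟩ := Metric.totallyBounded_iff.mp hK.totallyBounded (r/2) (by linarith)
  have hchoice : ∀ a : X, ∃ y : X, a ∈ M → y ∈ t ∧ a ∈ Metric.ball y (r/2) := by
    intro a
    by_cases ha : a ∈ M
    · have := htcov (hE (hME ha))
      simp only [mem_iUnion] at this
      obtain ⟨y, hy, hay⟩ := this
      exact ⟨y, fun _ => ⟨hy, hay⟩⟩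
    · exact ⟨a, fun h => absurd h ha⟩
  choose φ hφ using hchoice
  have hMfin : M.Finite := by
    refine Set.Finite.of_finite_image (f := φ) (htfin.subset ?_) ?_
    · rintro _ ⟨a, ha, rfl⟩; exact (hφ a ha).1
    · intro a ha b hb hab
      by_contra hne
      have h1 := (hφ a ha).2
      have h2 := (hφ b hb).2
      rw [hab] at h1
      have : dist a b < r := by
        have htri := dist_triangle a (φ b) b
        rw [Metric.mem_ball] at h1 h2
        rw [dist_comm (φ b) b] at htri
        linarith
      exact absurd (hMsep a ha b hb hne) (not_le.mpr this)
  refine ⟨hMfin.toFinset, by simpa using hME, by simpa using hMsep, ?_⟩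
  intro e he
  simp only [mem_iUnion, Set.Finite.mem_toFinset, Metric.mem_ball]
  by_cases heM : e ∈ M
  · exact ⟨e, heM, by simpa using hr⟩
  · by_contra hcon
    push_neg at hcon
    have : M ∪ {e} ∈ P := by
      constructor
      · exact union_subset hME (by simpa using he)
      · intro a ha b hb hab
        rcases ha with ha | ha
        · rcases hb with hb | hb
          · exact hMsep a ha b hb hab
          · simp only [mem_singleton_iff] at hb; subst hb
            rw [dist_comm]; exact hcon a ha
        · simp only [mem_singleton_iff] at ha; subst ha
          rcases hb with hb | hb
          · exact hcon b hb
          · simp only [mem_singleton_iff] at hb; exact absurd hb.symm hab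
    have := hMmax this subset_union_left
    have heM' : e ∈ M := this (by simp)
    exact heM heM'
  
lemma coverNum_le_of_sep {X : Type*} [MetricSpace X] {E : Set X} {r : ℝ} {F : Finset X}
    (hcov : E ⊆ ⋃ x ∈ F, Metric.ball x r) : coverNum E r ≤ (F.card : ℕ∞) := by
  exact iInf₂_le F hcov

lemma many_points {X : Type*} [MetricSpace X] {K : Set X} (hK : IsCompact K)
    {E : Set X} (hE : E ⊆ K) {t : ℝ} (ht : 0 < t) (hdim : (t : EReal) < upperBoxDim E)
    {ε : ℝ} (hε : 0 < ε) :
    ∃ g : ℝ, 0 < g ∧ g < ε ∧ ∃ F : Finset X, ↑F ⊆ E ∧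
      (∀ a ∈ F, ∀ b ∈ F, a ≠ b → g ≤ dist a b) ∧ (1/g) ^ t < (F.card : ℝ) := by
  have hfreq : ∃ᶠ r in nhdsWithin (0:ℝ) (Set.Ioi 0),
      (t : EReal) < ((Real.log ((coverNum E r).toNat) / Real.log (1 / r) : ℝ) : EReal) :=
    Filter.frequently_lt_of_lt_limsup (by isBoundedDefault) hdim
  have hmem : Set.Ioo (0:ℝ) (min ε 1) ∈ nhdsWithin (0:ℝ) (Set.Ioi 0) :=
    Ioo_mem_nhdsGT_of_mem (by constructor <;> simp [hε, lt_min_iff])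
  obtain ⟨g, hglt, hg⟩ := (hfreq.and_eventually (Filter.eventually_of_mem hmem (fun x hx => hx))).exists
  obtain ⟨hg0, hgε1⟩ := hg
  have hgε : g < ε := lt_of_lt_of_le hgε1 (min_le_left _ _)
  have hg1 : g < 1 := lt_of_lt_of_le hgε1 (min_le_right _ _)
  have hlog : 0 < Real.log (1/g) := Real.log_pos (by rw [lt_div_iff₀ hg0]; linarith)
  rw [EReal.coe_lt_coe_iff] at hglt
  set N : ℕ := (coverNum E g).toNat with hN
  have hNpos : 0 < (N:ℝ) := by
    by_contra h
    push_neg at h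
    have : (N:ℝ) = 0 := le_antisymm h (by positivity)
    rw [this, Real.log_zero] at hglt
    have : t * Real.log (1/g) < 0 := by
      rw [lt_div_iff₀ hlog] at hglt; linarith
    nlinarith [hlog, ht]
  have hkey : (1/g) ^ t < (N:ℝ) := by
    rw [← Real.exp_log hNpos, ← Real.exp_log (Real.rpow_pos_of_pos (by positivity : (0:ℝ) < 1/g) t),
      Real.exp_lt_exp, Real.log_rpow (by positivity)]
    rw [lt_div_iff₀ hlog] at hglt
    linarith
  obtain ⟨F, hFE, hFsep, hFcov⟩ := exists_maximal_sep hK hE hg0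
  refine ⟨g, hg0, hgε, F, hFE, hFsep, lt_of_lt_of_le hkey ?_⟩
  have hle : coverNum E g ≤ (F.card : ℕ∞) := iInf₂_le F hFcov
  have hcn : N ≤ F.card := ENat.toNat_le_of_le_coe hle
  exact_mod_cast hcn

lemma threshold {s t : ℝ} (hs : 0 < s) (hst : s < t) :
    ∃ g₁ : ℝ, 0 < g₁ ∧ g₁ ≤ 1 ∧ ∀ g : ℝ, 0 < g → g ≤ g₁ → (4/g) ^ s ≤ (1/g) ^ t := by
  have hts : 0 < t - s := by linarith
  refine ⟨min 1 ((4:ℝ) ^ (-(s/(t-s)))), lt_min one_pos (Real.rpow_pos_of_pos (by norm_num) _),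
    min_le_left _ _, ?_⟩
  intro g hg0 hgle
  have hg1 : g ≤ 1 := hgle.trans (min_le_left _ _)
  have hg2 : g ≤ (4:ℝ) ^ (-(s/(t-s))) := hgle.trans (min_le_right _ _)
  have hinv : (4:ℝ) ^ (s/(t-s)) ≤ 1/g := by
    rw [Real.rpow_neg (by norm_num)] at hg2
    have hpos : (0:ℝ) < (4:ℝ) ^ (s/(t-s)) := Real.rpow_pos_of_pos (by norm_num) _
    rw [le_div_iff₀ hg0]
    calc (4:ℝ) ^ (s/(t-s)) * g ≤ (4:ℝ) ^ (s/(t-s)) * ((4:ℝ) ^ (s/(t-s)))⁻¹ :=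
          mul_le_mul_of_nonneg_left hg2 hpos.le
    _ = 1 := mul_inv_cancel₀ (ne_of_gt hpos)
  have h4 : (4/g : ℝ) ^ s = 4 ^ s * (1/g) ^ s := by
    rw [show (4/g : ℝ) = 4 * (1/g) by ring, Real.mul_rpow (by norm_num) (by positivity)]
  have ht' : (1/g : ℝ) ^ t = (1/g) ^ s * (1/g) ^ (t - s) := by
    rw [← Real.rpow_add (by positivity), add_sub_cancel]
  rw [h4, ht']
  have h4s : (4:ℝ) ^ s ≤ (1/g) ^ (t - s) := by
    calc (4:ℝ) ^ s = ((4:ℝ) ^ (s/(t-s))) ^ (t-s) := by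
          rw [← Real.rpow_mul (by norm_num), div_mul_cancel₀ _ (ne_of_gt hts)]
    _ ≤ (1/g) ^ (t-s) := Real.rpow_le_rpow (by positivity) hinv (le_of_lt hts)
  have : (0:ℝ) < (1/g) ^ s := Real.rpow_pos_of_pos (by positivity) _
  nlinarith [Real.rpow_pos_of_pos (show (0:ℝ) < 4 by norm_num) s]

set_option maxHeartbeats 1000000 in
lemma approx {d : ℕ} {K : Set (EuclideanSpace ℝ (Fin d))} (hK : IsCompact K) (hne : K.Nonempty)
    {s t : ℝ} (hs : 0 < s) (hst : s < t)
    (hdim : ∀ z ∈ K, ∀ ρ : ℝ, 0 < ρ → (t : EReal) < upperBoxDim (K ∩ Metric.ball z ρ))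
    {l : ℕ} (hl : 1 ≤ l) (μ : ProbabilityMeasure K) {δ : ℝ} (hδ0 : 0 < δ) (hδl : δ < 1/(l:ℝ)) :
    ∃ ν : ProbabilityMeasure K,
      (∃ m : ℕ, l < m ∧ ∀ x ∈ K, ∃ r : ℝ, 1/(m:ℝ) < r ∧ r < 1/(l:ℝ) ∧
          measOn ν (Metric.ball x r) < ENNReal.ofReal (r ^ s)) ∧
      ∀ (f : BoundedContinuousFunction ↥K ℝ) (ζ : ℝ), 0 < ζ →
        (∀ a b : ↥K, dist a b ≤ 2*δ → |f a - f b| ≤ ζ) →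
        |∫ x, f x ∂(ν : Measure ↥K) - ∫ x, f x ∂(μ : Measure ↥K)| ≤ ζ := by
  classical
  have ht : 0 < t := hs.trans hst
  obtain ⟨g₁, hg₁0, hg₁1, hthr⟩ := threshold hs hst
  -- the net
  obtain ⟨F₀, hF₀K, hF₀sep, hF₀cov⟩ := exists_maximal_sep hK (subset_refl K) hδ0
  set J := F₀.card with hJ
  have hJpos : 0 < J := by
    rw [hJ, Finset.card_pos]
    obtain ⟨x₀, hx₀⟩ := hne
    have := hF₀cov hx₀
    simp only [mem_iUnion] at this
    obtain ⟨y, hy, -⟩ := this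
    exact ⟨y, hy⟩
  haveI : Nonempty (Fin J) := Fin.pos_iff_nonempty.mp hJpos
  set e : Fin J → EuclideanSpace ℝ (Fin d) := fun i => ↑(F₀.equivFin.symm i) with he
  have heF : ∀ i, e i ∈ F₀ := fun i => (F₀.equivFin.symm i).2
  have heK : ∀ i, e i ∈ K := fun i => hF₀K (heF i)
  have hesurj : ∀ x ∈ F₀, ∃ i, e i = x := fun x hx =>
    ⟨F₀.equivFin ⟨x, hx⟩, by simp [he]⟩
  have heinj : Function.Injective e := by
    intro i i' h
    have := F₀.equivFin.symm.injective (Subtype.ext h)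
    exact this
  -- the per-cell separated sets
  have hcell : ∀ i : Fin J, ∃ g : ℝ, 0 < g ∧ g < min g₁ (δ/100) ∧
      ∃ F : Finset (EuclideanSpace ℝ (Fin d)), ↑F ⊆ K ∩ Metric.ball (e i) (δ/8) ∧
      (∀ a ∈ F, ∀ b ∈ F, a ≠ b → g ≤ dist a b) ∧ (1/g) ^ t < (F.card : ℝ) :=
    fun i => many_points hK inter_subset_left ht (hdim _ (heK i) _ (by linarith))
      (lt_min hg₁0 (by linarith))
  choose g hg0 hgsm F hFE hFsep hFcard using hcell
  have hcardpos : ∀ i, 0 < (F i).card := by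
    intro i
    have hgi := hg0 i
    have h1 : (0:ℝ) < (1/(g i))^t := Real.rpow_pos_of_pos (by positivity) _
    exact_mod_cast Nat.cast_pos.mp (lt_trans h1 (hFcard i))
  -- atoms as subtype points
  set T : Fin J → Finset ↥K := fun i => (F i).subtype (· ∈ K) with hT
  have hTmem : ∀ i (a : ↥K), a ∈ T i ↔ ↑a ∈ F i := by
    intro i a; simp [hT, Finset.mem_subtype]
  have hTcard : ∀ i, (T i).card = (F i).card := by
    intro i
    rw [hT]
    simp only [Finset.card_subtype]
    congr 1
    exact Finset.filter_true_of_mem (fun x hx => (hFE i hx).1)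
  -- the partition
  set A : Fin J → Set ↥K := fun i =>
    (fun k : ↥K => (k : EuclideanSpace ℝ (Fin d))) ⁻¹'
      (Metric.ball (e i) δ \ ⋃ (i' : Fin J) (_ : i' < i), Metric.ball (e i') δ) with hA
  have hAmeas : ∀ i, MeasurableSet (A i) := by
    intro i
    apply measurable_subtype_coe
    exact (measurableSet_ball.diff (MeasurableSet.iUnion fun i' =>
      MeasurableSet.iUnion fun _ => measurableSet_ball))
  have hAdisj : Pairwise (Function.onFun Disjoint A) := by
    intro i i' hne'
    rw [Function.onFun, Set.disjoint_left]
    rcases lt_or_gt_of_ne hne' with h | h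
    · intro k hk hk'
      obtain ⟨hk'1, hk'2⟩ := hk'
      simp only [mem_iUnion] at hk'2
      exact hk'2 ⟨i, h, hk.1⟩
    · intro k hk hk'
      obtain ⟨hk1, hk2⟩ := hk
      simp only [mem_iUnion] at hk2
      exact hk2 ⟨i', h, hk'.1⟩
  have hAcov : (⋃ i, A i) = univ := by
    rw [eq_univ_iff_forall]
    intro k
    have hkK : (k : EuclideanSpace ℝ (Fin d)) ∈ K := k.2
    have := hF₀cov hkK
    simp only [mem_iUnion] at this
    obtain ⟨x, hxF, hxball⟩ := this
    obtain ⟨i₀, rfl⟩ := hesurj x hxF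
    set I : Finset (Fin J) := Finset.univ.filter
      (fun i => (k : EuclideanSpace ℝ (Fin d)) ∈ Metric.ball (e i) δ) with hI
    have hIne : I.Nonempty := ⟨i₀, by simp only [hI, Finset.mem_filter]; exact ⟨Finset.mem_univ _, hxball⟩⟩
    set imin := I.min' hIne with himin
    have himinI : imin ∈ I := I.min'_mem hIne
    simp only [hI, Finset.mem_filter] at himinI
    refine mem_iUnion.mpr ⟨imin, himinI.2, ?_⟩
    simp only [mem_iUnion, not_exists]
    intro i' hi'
    intro hmem
    have : i' ∈ I := by simp only [hI, Finset.mem_filter]; exact ⟨Finset.mem_univ _, hmem⟩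
    exact absurd (I.min'_le i' this) (not_le.mpr hi')
  -- masses
  set p : Fin J → ℝ≥0∞ := fun i => (μ : Measure ↥K) (A i) with hp
  have hpsum : ∑ i, p i = 1 := by
    rw [← tsum_fintype (L := SummationFilter.unconditional _)]
    rw [hp]
    simp only
    rw [← measure_iUnion hAdisj hAmeas, hAcov]
    exact measure_univ
  have hple : ∀ i, p i ≤ 1 := fun i => prob_le_one
  set w : Fin J → ℝ≥0∞ := fun i => p i / ((F i).card : ℝ≥0∞) with hw
  have hwtop : ∀ i, w i ≠ ⊤ := by
    intro i
    rw [hw]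
    simp only
    exact (ENNReal.div_lt_top (by exact ne_top_of_le_ne_top ENNReal.one_ne_top (hple i))
      (by exact_mod_cast (hcardpos i).ne')).ne
  -- the measure
  set ν₀ : Measure ↥K := ∑ i : Fin J, ∑ a ∈ T i, w i • Measure.dirac a with hν₀
  have hν₀apply : ∀ (S : Set ↥K), MeasurableSet S →
      ν₀ S = ∑ i : Fin J, ∑ a ∈ T i, w i * S.indicator 1 a := by
    intro S hS
    rw [hν₀, Measure.finset_sum_apply]
    congr 1
    ext i
    rw [Measure.finset_sum_apply]
    congr 1
    ext a
    rw [Measure.smul_apply, Measure.dirac_apply' _ hS, smul_eq_mul]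
  have hν₀tot : ν₀ univ = 1 := by
    rw [hν₀apply univ MeasurableSet.univ]
    have : ∀ i : Fin J, ∑ a ∈ T i, w i * (univ : Set ↥K).indicator 1 a = p i := by
      intro i
      have : ∀ a : ↥K, (univ : Set ↥K).indicator (1 : ↥K → ℝ≥0∞) a = 1 := by
        intro a; simp
      simp only [this, mul_one, Finset.sum_const, hTcard i, nsmul_eq_mul]
      rw [hw]
      simp only
      exact ENNReal.mul_div_cancel' (fun h => absurd h (by exact_mod_cast (hcardpos i).ne'))
        (fun h => absurd h (by exact_mod_cast (ENNReal.natCast_ne_top _)))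
    rw [Finset.sum_congr rfl (fun i _ => this i), hpsum]
  haveI hν₀prob : IsProbabilityMeasure ν₀ := ⟨hν₀tot⟩
  set ν : ProbabilityMeasure K := ⟨ν₀, hν₀prob⟩ with hνdef
  refine ⟨ν, ?_, ?_⟩
  · -- membership in U
    set rmin : ℝ := min (δ/4) (Finset.univ.inf' Finset.univ_nonempty (fun i => g i / 4)) with hrmin
    have hrmin0 : 0 < rmin := by
      apply lt_min (by linarith)
      rw [Finset.lt_inf'_iff]
      intro i _
      have := hg0 i
      linarith
    obtain ⟨m, hm⟩ := exists_nat_gt (max (l:ℝ) (1/rmin))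
    have hml : l < m := by exact_mod_cast (le_max_left (l:ℝ) (1/rmin)).trans_lt hm
    have hrm : 1/(m:ℝ) < rmin := by
      have h1 : 1/rmin < m := (le_max_right (l:ℝ) (1/rmin)).trans_lt hm
      have hm0 : (0:ℝ) < m := lt_of_le_of_lt (by positivity) h1
      rw [div_lt_iff₀ hm0]
      rw [div_lt_iff₀ hrmin0] at h1
      nlinarith
    refine ⟨m, hml, ?_⟩
    intro x hx
    have hmeas : ∀ r : ℝ, measOn ν (Metric.ball x r) =
        ∑ i : Fin J, ∑ a ∈ T i, w i *
          ((fun k : ↥K => (k : EuclideanSpace ℝ (Fin d))) ⁻¹' Metric.ball x r).indicator 1 a := by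
      intro r
      have hSB : MeasurableSet ((fun k : ↥K => (k : EuclideanSpace ℝ (Fin d))) ⁻¹'
          Metric.ball x r) := measurable_subtype_coe measurableSet_ball
      show ((ν : Measure ↥K).map Subtype.val) (Metric.ball x r) = _
      rw [Measure.map_apply measurable_subtype_coe measurableSet_ball]
      exact hν₀apply _ hSB
    by_cases hcase : ∃ i : Fin J, ∃ a ∈ F i, dist x a < δ/4
    · obtain ⟨i, a₀, ha₀F, ha₀x⟩ := hcase
      have hgi0 := hg0 i
      have hgiδ : g i < δ/100 := lt_of_lt_of_le (hgsm i) (min_le_right _ _)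
      have hgig₁ : g i ≤ g₁ := le_of_lt (lt_of_lt_of_le (hgsm i) (min_le_left _ _))
      refine ⟨g i / 4, ?_, ?_, ?_⟩
      · calc 1/(m:ℝ) < rmin := hrm
          _ ≤ g i / 4 := (min_le_right _ _).trans (Finset.inf'_le _ (Finset.mem_univ i))
      · linarith
      · rw [hmeas]
        set S := ((fun k : ↥K => (k : EuclideanSpace ℝ (Fin d))) ⁻¹'
          Metric.ball x (g i / 4)) with hSdef
        have hnotin : ∀ i' : Fin J, i' ≠ i → ∀ b ∈ T i', b ∉ S := by
          intro i' hne' b hb hbS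
          have hbij : dist (b : EuclideanSpace ℝ (Fin d)) x < g i / 4 := by
            have : (b : EuclideanSpace ℝ (Fin d)) ∈ Metric.ball x (g i / 4) := hbS
            rw [mem_ball] at this
            exact this
          have hb' := (hFE i') ((hTmem i' b).mp hb)
          have ha₀' := hFE i ha₀F
          have hb2 : dist (b : EuclideanSpace ℝ (Fin d)) (e i') < δ/8 := by
            have := hb'.2; rwa [mem_ball] at this
          have ha2 : dist a₀ (e i) < δ/8 := by
            have := ha₀'.2; rwa [mem_ball] at this
          have hsep : δ ≤ dist (e i) (e i') :=
            hF₀sep _ (heF i) _ (heF i') (fun h => hne'.symm (heinj h))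
          have htri1 : dist (e i) (e i') ≤
              dist (e i) a₀ + dist a₀ (b : EuclideanSpace ℝ (Fin d)) +
                dist (b : EuclideanSpace ℝ (Fin d)) (e i') := dist_triangle4 _ _ _ _
          have htri2 : dist a₀ (b : EuclideanSpace ℝ (Fin d)) ≤
              dist a₀ x + dist x (b : EuclideanSpace ℝ (Fin d)) := dist_triangle _ _ _
          have hc1 : dist (e i) a₀ = dist a₀ (e i) := dist_comm _ _
          have hc2 : dist a₀ x = dist x a₀ := dist_comm _ _
          have hc3 : dist x (b : EuclideanSpace ℝ (Fin d)) =
              dist (b : EuclideanSpace ℝ (Fin d)) x := dist_comm _ _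
          linarith
        have houter : ∀ i' ∈ Finset.univ, i' ≠ i →
            ∑ a ∈ T i', w i' * S.indicator 1 a = 0 := by
          intro i' _ hne'
          apply Finset.sum_eq_zero
          intro b hb
          rw [Set.indicator_of_notMem (hnotin i' hne' b hb), mul_zero]
        rw [Finset.sum_eq_single_of_mem i (Finset.mem_univ i) houter]
        have hinner : ∑ a ∈ T i, w i * S.indicator 1 a ≤ w i := by
          by_cases hexists : ∃ b ∈ T i, b ∈ S
          · obtain ⟨b₁, hb₁T, hb₁S⟩ := hexists
            rw [Finset.sum_eq_single_of_mem b₁ hb₁T ?_]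
            · rw [Set.indicator_of_mem hb₁S, Pi.one_apply, mul_one]
            · intro b hbT hbb₁
              have hbS : b ∉ S := by
                intro hbS
                have hd : dist (b : EuclideanSpace ℝ (Fin d))
                    (b₁ : EuclideanSpace ℝ (Fin d)) < g i := by
                  have h1 : dist (b : EuclideanSpace ℝ (Fin d)) x < g i/4 := by
                    have : (b : EuclideanSpace ℝ (Fin d)) ∈ Metric.ball x (g i / 4) := hbS
                    rwa [mem_ball] at this
                  have h2 : dist (b₁ : EuclideanSpace ℝ (Fin d)) x < g i/4 := by
                    have : (b₁ : EuclideanSpace ℝ (Fin d)) ∈ Metric.ball x (g i / 4) := hb₁S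
                    rwa [mem_ball] at this
                  have := dist_triangle (b : EuclideanSpace ℝ (Fin d)) x
                    (b₁ : EuclideanSpace ℝ (Fin d))
                  rw [dist_comm (b₁ : EuclideanSpace ℝ (Fin d)) x] at h2
                  linarith
                have hsep := hFsep i _ ((hTmem i b).mp hbT) _ ((hTmem i b₁).mp hb₁T)
                  (fun h => hbb₁ (Subtype.ext h))
                linarith
              rw [Set.indicator_of_notMem hbS, mul_zero]
          · push_neg at hexists
            rw [Finset.sum_eq_zero (fun b hb => by
              rw [Set.indicator_of_notMem (hexists b hb), mul_zero])]
            exact zero_le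
        refine lt_of_le_of_lt hinner ?_
        have h4g : (4/(g i))^s ≤ (1/(g i))^t := hthr (g i) hgi0 hgig₁
        have hcardR : (4/(g i))^s < ((F i).card : ℝ) := lt_of_le_of_lt h4g (hFcard i)
        have h4gpos : (0:ℝ) < (4/(g i))^s := Real.rpow_pos_of_pos (by positivity) _
        have hr : (g i/4)^s = ((4/(g i))^s)⁻¹ := by
          rw [← Real.inv_rpow (by positivity), inv_div]
        have hwle : w i ≤ (1:ℝ≥0∞)/((F i).card : ℝ≥0∞) :=
          ENNReal.div_le_div_right (hple i) _
        refine lt_of_le_of_lt hwle ?_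
        rw [one_div, ← ENNReal.ofReal_natCast, ← ENNReal.ofReal_inv_of_pos
          (by exact_mod_cast hcardpos i)]
        rw [ENNReal.ofReal_lt_ofReal_iff (Real.rpow_pos_of_pos (by positivity) _)]
        rw [hr]
        exact inv_strictAnti₀ h4gpos hcardR
    · push_neg at hcase
      refine ⟨δ/4, ?_, ?_, ?_⟩
      · calc 1/(m:ℝ) < rmin := hrm
          _ ≤ δ/4 := min_le_left _ _
      · linarith
      · rw [hmeas]
        have hzero : ∀ i : Fin J, ∑ a ∈ T i, w i *
            ((fun k : ↥K => (k : EuclideanSpace ℝ (Fin d))) ⁻¹'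
              Metric.ball x (δ/4)).indicator 1 a = 0 := by
          intro i
          apply Finset.sum_eq_zero
          intro b hb
          have hbF : (b : EuclideanSpace ℝ (Fin d)) ∈ F i := (hTmem i b).mp hb
          have : (b : EuclideanSpace ℝ (Fin d)) ∉ Metric.ball x (δ/4) := by
            rw [mem_ball]
            rw [dist_comm]
            exact not_lt.mpr (hcase i _ hbF)
          rw [Set.indicator_of_notMem (fun h => this (Set.mem_preimage.mp h)), mul_zero]
        rw [Finset.sum_eq_zero (fun i _ => hzero i)]
        exact ENNReal.ofReal_pos.mpr (Real.rpow_pos_of_pos (by linarith) _)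
  · intro f ζ hζ hmod
    have hcoe : (ν : Measure ↥K) = ν₀ := rfl
    have hν₀int : ∫ x, f x ∂ν₀ = ∑ i : Fin J, ∑ a ∈ T i, (w i).toReal * f a := by
      rw [hν₀]
      rw [integral_finset_sum_measure (fun i _ => (integrable_finset_sum_measure.mpr
        (fun a _ => (f.integrable _).smul_measure (hwtop i))))]
      apply Finset.sum_congr rfl
      intro i _
      rw [integral_finset_sum_measure (fun a _ => (f.integrable _).smul_measure (hwtop i))]
      apply Finset.sum_congr rfl
      intro a _
      rw [integral_smul_measure, integral_dirac, smul_eq_mul]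
    have hμint : ∫ x, f x ∂(μ : Measure ↥K) =
        ∑ i : Fin J, ∫ x in A i, f x ∂(μ : Measure ↥K) := by
      conv_lhs => rw [← setIntegral_univ, ← hAcov]
      rw [integral_iUnion hAmeas hAdisj ((f.integrable _).integrableOn)]
      exact tsum_fintype _
    set P : Fin J → ℝ := fun i => (p i).toReal with hP
    have hP0 : ∀ i, 0 ≤ P i := fun i => ENNReal.toReal_nonneg
    have hPsum : ∑ i, P i = 1 := by
      have h1 := ENNReal.toReal_sum (s := (Finset.univ : Finset (Fin J))) (f := p)
        (fun i _ => ne_top_of_le_ne_top ENNReal.one_ne_top (hple i))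
      rw [hpsum] at h1
      simpa using h1.symm
    have hwP : ∀ i, (w i).toReal = P i / ((F i).card : ℝ) := by
      intro i
      rw [hw]
      simp only
      rw [ENNReal.toReal_div]
      congr 1
    have hkey : ∀ i : Fin J,
        |∫ x in A i, f x ∂(μ : Measure ↥K) - ∑ a ∈ T i, (w i).toReal * f a| ≤ ζ * P i := by
      intro i
      set c : ℝ := ((F i).card : ℝ) with hc
      have hc0 : (0:ℝ) < c := by rw [hc]; exact_mod_cast hcardpos i
      set I : ℝ := ∫ x in A i, f x ∂(μ : Measure ↥K) with hI
      have hbound : ∀ a ∈ T i, |I - P i * f a| ≤ ζ * P i := by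
        intro a haT
        have haK : (a : EuclideanSpace ℝ (Fin d)) ∈ K ∩ Metric.ball (e i) (δ/8) :=
          hFE i ((hTmem i a).mp haT)
        have hconst : ∫ _x in A i, (f a) ∂(μ : Measure ↥K) = P i * f a := by
          rw [setIntegral_const, smul_eq_mul]
          rfl
        have hsub : I - P i * f a = ∫ x in A i, (f x - f a) ∂(μ : Measure ↥K) := by
          rw [integral_sub ((f.integrable _).integrableOn)
            (integrableOn_const (measure_lt_top _ _).ne), hconst]
        rw [hsub, ← Real.norm_eq_abs]
        have habs := norm_setIntegral_le_of_norm_le_const (μ := (μ : Measure ↥K)) (s := A i)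
          (C := ζ) (f := fun x => f x - f a) (measure_lt_top _ _) ?_
        · exact le_trans habs (le_of_eq rfl)
        · intro x hxA
          rw [Real.norm_eq_abs]
          apply hmod
          have hx1 : ((x : ↥K) : EuclideanSpace ℝ (Fin d)) ∈ Metric.ball (e i) δ := hxA.1
          rw [mem_ball] at hx1
          have hx2 : dist (a : EuclideanSpace ℝ (Fin d)) (e i) < δ/8 := by
            have := haK.2
            rwa [mem_ball] at this
          rw [Subtype.dist_eq]
          calc dist (x : EuclideanSpace ℝ (Fin d)) (a : EuclideanSpace ℝ (Fin d))
              ≤ dist (x : EuclideanSpace ℝ (Fin d)) (e i) +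
                dist (e i) (a : EuclideanSpace ℝ (Fin d)) := dist_triangle _ _ _
            _ ≤ δ + δ/8 := by
                rw [dist_comm (e i)]
                exact add_le_add hx1.le hx2.le
            _ ≤ 2*δ := by linarith
      have hrw1 : ∑ a ∈ T i, (w i).toReal * f a = (1/c) * ∑ a ∈ T i, P i * f a := by
        rw [Finset.mul_sum]
        apply Finset.sum_congr rfl
        intro a _
        rw [hwP i]
        ring
      have hrw2 : ∑ a ∈ T i, (I - P i * f a) = c * I - ∑ a ∈ T i, P i * f a := by
        rw [Finset.sum_sub_distrib, Finset.sum_const, hTcard i, nsmul_eq_mul]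
      have hrewrite : I - ∑ a ∈ T i, (w i).toReal * f a
          = (1/c) * ∑ a ∈ T i, (I - P i * f a) := by
        rw [hrw1, hrw2, mul_sub]
        rw [← mul_assoc, one_div_mul_cancel hc0.ne', one_mul]
      have hc1 : (0:ℝ) < 1/c := one_div_pos.mpr hc0
      rw [hrewrite, abs_mul, abs_of_pos hc1]
      calc (1/c) * |∑ a ∈ T i, (I - P i * f a)|
          ≤ (1/c) * ∑ a ∈ T i, |I - P i * f a| := by
            exact mul_le_mul_of_nonneg_left (Finset.abs_sum_le_sum_abs _ _) hc1.le
        _ ≤ (1/c) * ∑ _a ∈ T i, ζ * P i := by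
            exact mul_le_mul_of_nonneg_left (Finset.sum_le_sum hbound) hc1.le
        _ = (1/c) * (c * (ζ * P i)) := by
            rw [Finset.sum_const, hTcard i, nsmul_eq_mul]
        _ = ζ * P i := by rw [← mul_assoc, one_div_mul_cancel hc0.ne', one_mul]
    rw [hcoe, hν₀int, hμint, ← Finset.sum_sub_distrib]
    have habs2 : |∑ i : Fin J, (∫ x in A i, f x ∂(μ : Measure ↥K) -
        ∑ a ∈ T i, (w i).toReal * f a)| ≤
        ∑ i : Fin J, |∫ x in A i, f x ∂(μ : Measure ↥K) - ∑ a ∈ T i, (w i).toReal * f a| :=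
      Finset.abs_sum_le_sum_abs _ _
    calc |∑ i : Fin J, (∑ a ∈ T i, (w i).toReal * f a -
          ∫ x in A i, f x ∂(μ : Measure ↥K))|
        = |∑ i : Fin J, (∫ x in A i, f x ∂(μ : Measure ↥K) -
          ∑ a ∈ T i, (w i).toReal * f a)| := by
          rw [← abs_neg, ← Finset.sum_neg_distrib]
          congr 1
          apply Finset.sum_congr rfl
          intro i _
          ring
      _ ≤ ∑ i : Fin J, |∫ x in A i, f x ∂(μ : Measure ↥K) -
          ∑ a ∈ T i, (w i).toReal * f a| := habs2
      _ ≤ ∑ i : Fin J, ζ * P i := Finset.sum_le_sum (fun i _ => hkey i)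
      _ = ζ * ∑ i, P i := by rw [Finset.mul_sum]
      _ = ζ := by rw [hPsum, mul_one]

theorem dense_union_U
    {d : ℕ} (K : Set (EuclideanSpace ℝ (Fin d))) (hK : IsCompact K) (hne : K.Nonempty)
    (s : ℝ) (hs : 0 < s) (hsK : (s : EReal) < localUpperBoxDim K)
    (l : ℕ) (hl : 1 ≤ l) :
    Dense {μ : ProbabilityMeasure K |
      ∃ m : ℕ, l < m ∧ ∀ x ∈ K, ∃ r : ℝ, 1 / (m : ℝ) < r ∧ r < 1 / (l : ℝ) ∧
        measOn μ (Metric.ball x r) < ENNReal.ofReal (r ^ s)} := by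
  obtain ⟨t, hst, htK⟩ := EReal.exists_between_coe_real hsK
  have hstR : s < t := EReal.coe_lt_coe_iff.mp hst
  have hdim : ∀ z ∈ K, ∀ ρ : ℝ, 0 < ρ → (t : EReal) < upperBoxDim (K ∩ Metric.ball z ρ) := by
    intro z hz ρ hρ
    refine lt_of_lt_of_le htK ?_
    exact iInf_le_of_le z (iInf_le_of_le hz (iInf_le_of_le ρ (iInf_le _ hρ)))
  haveI : CompactSpace ↥K := isCompact_iff_compactSpace.mp hK
  rw [dense_iff_closure_eq, Set.eq_univ_iff_forall]
  intro μ
  have hl0 : (0:ℝ) < l := by exact_mod_cast hl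
  set δ : ℕ → ℝ := fun n => min (1/((n:ℝ)+1)) (1/(2*(l:ℝ))) with hδ
  have hδ0 : ∀ n, 0 < δ n := fun n => lt_min (by positivity) (by positivity)
  have hδl : ∀ n, δ n < 1/(l:ℝ) := by
    intro n
    refine lt_of_le_of_lt (min_le_right _ _) ?_
    apply one_div_lt_one_div_of_lt hl0
    linarith
  have happrox := fun n => approx hK hne hs hstR hdim hl μ (hδ0 n) (hδl n)
  choose ν hν1 hν2 using happrox
  refine mem_closure_of_tendsto (x := μ) (b := (atTop : Filter ℕ)) (f := ν) ?_ (Filter.Eventually.of_forall (fun n => hν1 n))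
  rw [MeasureTheory.ProbabilityMeasure.tendsto_iff_forall_integral_tendsto]
  intro f
  rw [Metric.tendsto_atTop]
  intro ζ hζ
  obtain ⟨dd, hdd0, hdd⟩ := Metric.uniformContinuous_iff.mp
    (CompactSpace.uniformContinuous_of_continuous f.continuous) (ζ/2) (by linarith)
  obtain ⟨N, hN⟩ := exists_nat_gt (2/dd)
  refine ⟨N, fun n hn => ?_⟩
  have hmod : ∀ a b : ↥K, dist a b ≤ 2*(δ n) → |f a - f b| ≤ ζ/2 := by
    intro a b hab
    have hNpos : (0:ℝ) < (N:ℝ)+1 := by positivity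
    have h1 : 2*(δ n) ≤ 2/((n:ℝ)+1) := by
      have := min_le_left (1/((n:ℝ)+1)) (1/(2*(l:ℝ)))
      have h2 : δ n ≤ 1/((n:ℝ)+1) := this
      have h3 : 2*(1/((n:ℝ)+1)) = 2/((n:ℝ)+1) := by ring
      linarith
    have h2 : (2:ℝ)/((n:ℝ)+1) ≤ 2/((N:ℝ)+1) := by
      apply div_le_div_of_nonneg_left (by norm_num) hNpos
      have : (N:ℝ) ≤ (n:ℝ) := by exact_mod_cast hn
      linarith
    have h3 : (2:ℝ)/((N:ℝ)+1) < dd := by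
      rw [div_lt_iff₀ hNpos]
      rw [div_lt_iff₀ hdd0] at hN
      nlinarith
    have : dist a b < dd := by linarith
    have := hdd this
    rw [Real.dist_eq] at this
    exact this.le
  have hkey := hν2 n f (ζ/2) (by linarith) hmod
  rw [Real.dist_eq]
  exact lt_of_le_of_lt hkey (by linarith)
end
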